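/- arXiv:0904.4289 — 10 statements merged into one kernel-verified Lean document; each statement's English description precedes it below -/
import Mathlib

section
/- Let N ≥ 1 and let Λ be a real diagonal N×N matrix with Λ_i + Λ_j > 0 for all i ≠ j. Suppose Q, P : ℝ → Matrix (Fin N) (Fin N) ℝ are differentiable curves and Ω : ℝ → Matrix (Fin N) (Fin N) ℝ is a curve of skew-symmetric matrices (Ω(t)ᵀ = −Ω(t)) such that for all t: ΛΩ(t) + Ω(t)Λ = Q(t)ᵀP(t) − P(t)ᵀQ(t), Q'(t) = Q(t)Ω(t), and P'(t) = P(t)Ω(t). Then the curve M(t) := Q(t)ᵀP(t) − P(t)ᵀQ(t) is differentiable and satisfies the rigid body equation M'(t) = M(t)Ω(t) − Ω(t)M(t) for all t. -/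
open Matrix

/-- **Symmetric representation of the SO(N) rigid body.**
If `Q, P` are differentiable matrix curves, `Ω` is a curve of skew-symmetric
matrices related to `Q, P` by the inertia relation `ΛΩ + ΩΛ = QᵀP - PᵀQ`,
and `Q' = QΩ`, `P' = PΩ`, then `M := QᵀP - PᵀQ` is differentiable and
satisfies the rigid body equation `M' = MΩ - ΩM = [M, Ω]`. -/
theorem symmetric_representation_rigid_body
    {N : ℕ} (hN : 1 ≤ N)
    (Λ : Matrix (Fin N) (Fin N) ℝ)
    (hΛdiag : ∀ i j : Fin N, i ≠ j → Λ i j = 0)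
    (hΛpos : ∀ i j : Fin N, i ≠ j → 0 < Λ i i + Λ j j)
    (Q P Ω : ℝ → Matrix (Fin N) (Fin N) ℝ)
    (hskew : ∀ t : ℝ, (Ω t)ᵀ = -Ω t)
    (hJ : ∀ t : ℝ, Λ * Ω t + Ω t * Λ = (Q t)ᵀ * P t - (P t)ᵀ * Q t)
    (hQ : ∀ (t : ℝ) (i j : Fin N),
      HasDerivAt (fun s => Q s i j) ((Q t * Ω t) i j) t)
    (hP : ∀ (t : ℝ) (i j : Fin N),
      HasDerivAt (fun s => P s i j) ((P t * Ω t) i j) t) :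
    ∀ (t : ℝ) (i j : Fin N),
      HasDerivAt (fun s => ((Q s)ᵀ * P s - (P s)ᵀ * Q s) i j)
        ((((Q t)ᵀ * P t - (P t)ᵀ * Q t) * Ω t
          - Ω t * ((Q t)ᵀ * P t - (P t)ᵀ * Q t)) i j) t := by
  intro t i j
  have h1 : HasDerivAt (fun s => ((Q s)ᵀ * P s) i j)
      (((Q t * Ω t)ᵀ * P t + (Q t)ᵀ * (P t * Ω t)) i j) t := by
    simp only [Matrix.mul_apply, Matrix.transpose_apply, Matrix.add_apply,
      ← Finset.sum_add_distrib]
    exact HasDerivAt.fun_sum fun k _ => (hQ t k i).mul (hP t k j)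
  have h2 : HasDerivAt (fun s => ((P s)ᵀ * Q s) i j)
      (((P t * Ω t)ᵀ * Q t + (P t)ᵀ * (Q t * Ω t)) i j) t := by
    simp only [Matrix.mul_apply, Matrix.transpose_apply, Matrix.add_apply,
      ← Finset.sum_add_distrib]
    exact HasDerivAt.fun_sum fun k _ => (hP t k i).mul (hQ t k j)
  have key : ((Q t * Ω t)ᵀ * P t + (Q t)ᵀ * (P t * Ω t))
      - ((P t * Ω t)ᵀ * Q t + (P t)ᵀ * (Q t * Ω t))
      = (((Q t)ᵀ * P t - (P t)ᵀ * Q t) * Ω t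
          - Ω t * ((Q t)ᵀ * P t - (P t)ᵀ * Q t)) := by
    simp only [Matrix.transpose_mul, hskew]
    noncomm_ring
  have h3 := h1.sub h2
  simp only [Matrix.sub_apply] at h3 ⊢
  rw [show ((((Q t)ᵀ * P t - (P t)ᵀ * Q t) * Ω t) i j
      - (Ω t * ((Q t)ᵀ * P t - (P t)ᵀ * Q t)) i j)
      = (((Q t * Ω t)ᵀ * P t + (Q t)ᵀ * (P t * Ω t)) i j
        - ((P t * Ω t)ᵀ * Q t + (P t)ᵀ * (Q t * Ω t)) i j) from by
    rw [← Matrix.sub_apply, ← Matrix.sub_apply, key]]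
  exact h3
end

section
/- Let Λ be a real diagonal N×N matrix with Λ_i + Λ_j > 0 for all i ≠ j. Suppose Q, P : ℝ → Matrix (Fin N) (Fin N) ℝ are differentiable, Ω : ℝ → Matrix (Fin N) (Fin N) ℝ is differentiable with Ω(t) skew-symmetric, ΛΩ(t) + Ω(t)Λ = Q(t)ᵀP(t) − P(t)ᵀQ(t) =: M(t), Q'(t) = Q(t)Ω(t) and P'(t) = P(t)Ω(t) for all t. Then the energy H(t) := (1/8)·trace(Ω(t)ᵀ M(t)) is constant in t. -/
open Matrix

/-- Key algebraic identity: the derivative of the energy vanishes. -/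
lemma rigid_key {N : ℕ} (Λ A A' Mt : Matrix (Fin N) (Fin N) ℝ)
    (hΛs : Λᵀ = Λ) (hs : Aᵀ = -A)
    (hMrel : Λ * A + A * Λ = Mt)
    (hrel : Λ * A' + A' * Λ = Aᵀ * Mt + Mt * A) :
    ((A')ᵀ * Mt).trace + (Aᵀ * (Aᵀ * Mt + Mt * A)).trace = 0 := by
  have h1 : ((A')ᵀ * Mt).trace = (Aᵀ * (Aᵀ * Mt + Mt * A)).trace := by
    rw [← hrel, ← hMrel]
    have e1 : ((A')ᵀ * (Λ * A + A * Λ)).trace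
        = ((A')ᵀ * (Λ * A)).trace + ((A')ᵀ * (A * Λ)).trace := by
      rw [mul_add, trace_add]
    have e2 : (Aᵀ * (Λ * A' + A' * Λ)).trace
        = (Aᵀ * (Λ * A')).trace + (Aᵀ * (A' * Λ)).trace := by
      rw [mul_add, trace_add]
    rw [e1, e2]
    have t1 : ((A')ᵀ * (Λ * A)).trace = (Aᵀ * (Λ * A')).trace := by
      have e1' : (Aᵀ * (Λ * A'))ᵀ = (A')ᵀ * (Λ * A) := by
        simp [Matrix.transpose_mul, hΛs, Matrix.mul_assoc]
      rw [← e1', trace_transpose]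
    have t2 : ((A')ᵀ * (A * Λ)).trace = (Aᵀ * (A' * Λ)).trace := by
      have e : (Aᵀ * (A' * Λ))ᵀ = Λ * ((A')ᵀ * A) := by
        simp [Matrix.transpose_mul, hΛs, Matrix.mul_assoc]
      rw [← Matrix.mul_assoc, Matrix.trace_mul_comm, ← e, trace_transpose]
    rw [t1, t2]
  have h2 : (Aᵀ * (Aᵀ * Mt + Mt * A)).trace = 0 := by
    rw [hs]
    have : (-A) * ((-A) * Mt + Mt * A) = - (A * (-(A * Mt) + Mt * A)) := by
      noncomm_ring
    rw [this, trace_neg, mul_add, trace_add]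
    simp only [Matrix.mul_neg, trace_neg, ← Matrix.mul_assoc]
    rw [Matrix.trace_mul_cycle A Mt A]
    ring
  rw [h1, h2]
  norm_num

/-- **Energy conservation for the symmetric SO(N) rigid body system.**
Along solutions of `Q' = QΩ`, `P' = PΩ` with `Ω` skew-symmetric,
differentiable, and related to `M := QᵀP - PᵀQ` by the inertia relation
`ΛΩ + ΩΛ = M`, the energy `H(t) = (1/8)·trace(Ω(t)ᵀ M(t))` is constant. -/
theorem rigid_body_energy_conservation
    {N : ℕ} (Λ : Matrix (Fin N) (Fin N) ℝ)
    (hΛdiag : ∀ i j : Fin N, i ≠ j → Λ i j = 0)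
    (hΛpos : ∀ i j : Fin N, i ≠ j → 0 < Λ i i + Λ j j)
    (Q P Ω Ω' : ℝ → Matrix (Fin N) (Fin N) ℝ)
    (hskew : ∀ t : ℝ, (Ω t)ᵀ = -Ω t)
    (hΩ : ∀ (t : ℝ) (i j : Fin N),
      HasDerivAt (fun s => Ω s i j) (Ω' t i j) t)
    (hJ : ∀ t : ℝ, Λ * Ω t + Ω t * Λ = (Q t)ᵀ * P t - (P t)ᵀ * Q t)
    (hQ : ∀ (t : ℝ) (i j : Fin N),
      HasDerivAt (fun s => Q s i j) ((Q t * Ω t) i j) t)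
    (hP : ∀ (t : ℝ) (i j : Fin N),
      HasDerivAt (fun s => P s i j) ((P t * Ω t) i j) t) :
    ∀ t₁ t₂ : ℝ,
      (1 / 8 : ℝ) * ((Ω t₁)ᵀ * ((Q t₁)ᵀ * P t₁ - (P t₁)ᵀ * Q t₁)).trace
        = (1 / 8 : ℝ) * ((Ω t₂)ᵀ * ((Q t₂)ᵀ * P t₂ - (P t₂)ᵀ * Q t₂)).trace := by
  classical
  set M : ℝ → Matrix (Fin N) (Fin N) ℝ := fun t => (Q t)ᵀ * P t - (P t)ᵀ * Q t with hM
  have hΛs : Λᵀ = Λ := by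
    ext i j
    by_cases h : i = j
    · subst h; simp
    · simp [Matrix.transpose_apply, hΛdiag i j h, hΛdiag j i (Ne.symm h)]
  -- entrywise derivative of M
  have hMderiv : ∀ t i j, HasDerivAt (fun s => M s i j)
      (((Ω t)ᵀ * M t + M t * Ω t) i j) t := by
    intro t i j
    have h1 : HasDerivAt (fun s => ∑ k, Q s k i * P s k j)
        (∑ k, ((Q t * Ω t) k i * P t k j + Q t k i * (P t * Ω t) k j)) t :=
      HasDerivAt.fun_sum fun k _ => (hQ t k i).fun_mul (hP t k j)
    have h2 : HasDerivAt (fun s => ∑ k, P s k i * Q s k j)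
        (∑ k, ((P t * Ω t) k i * Q t k j + P t k i * (Q t * Ω t) k j)) t :=
      HasDerivAt.fun_sum fun k _ => (hP t k i).fun_mul (hQ t k j)
    have h := h1.fun_sub h2
    have hfun : (fun s => M s i j)
        = fun s => (∑ k, Q s k i * P s k j) - ∑ k, P s k i * Q s k j := by
      funext s
      simp [hM, Matrix.sub_apply, Matrix.mul_apply, Matrix.transpose_apply]
    rw [hfun]
    refine h.congr_deriv ?_; symm
    have hD : (Ω t)ᵀ * M t + M t * Ω t
        = (Q t * Ω t)ᵀ * P t + (Q t)ᵀ * (P t * Ω t)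
          - ((P t * Ω t)ᵀ * Q t + (P t)ᵀ * (Q t * Ω t)) := by
      simp only [hM, Matrix.transpose_mul]
      noncomm_ring
    rw [hD]
    simp only [Matrix.sub_apply, Matrix.add_apply, Matrix.mul_apply, Matrix.transpose_apply,
      Finset.sum_add_distrib]
  -- inertia relation for derivatives
  have hEq : ∀ t, Λ * Ω' t + Ω' t * Λ = (Ω t)ᵀ * M t + M t * Ω t := by
    intro t
    ext i j
    have hL : HasDerivAt (fun s => (Λ * Ω s + Ω s * Λ) i j)
        ((Λ * Ω' t + Ω' t * Λ) i j) t := by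
      have h1 : HasDerivAt (fun s => ∑ k, Λ i k * Ω s k j)
          (∑ k, Λ i k * Ω' t k j) t :=
        HasDerivAt.fun_sum fun k _ => (hΩ t k j).const_mul (Λ i k)
      have h2 : HasDerivAt (fun s => ∑ k, Ω s i k * Λ k j)
          (∑ k, Ω' t i k * Λ k j) t :=
        HasDerivAt.fun_sum fun k _ => (hΩ t i k).mul_const (Λ k j)
      have h := h1.fun_add h2
      have hfun : (fun s => (Λ * Ω s + Ω s * Λ) i j)
          = fun s => (∑ k, Λ i k * Ω s k j) + ∑ k, Ω s i k * Λ k j := by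
        funext s; simp [Matrix.add_apply, Matrix.mul_apply]
      rw [hfun]
      refine h.congr_deriv ?_; symm
      simp [Matrix.add_apply, Matrix.mul_apply]
    have hR : HasDerivAt (fun s => (Λ * Ω s + Ω s * Λ) i j)
        (((Ω t)ᵀ * M t + M t * Ω t) i j) t := by
      have hfun : (fun s => (Λ * Ω s + Ω s * Λ) i j) = fun s => M s i j := by
        funext s; rw [hJ s]
      rw [hfun]; exact hMderiv t i j
    exact hL.unique hR
  -- the energy (times 8) as a function
  set f : ℝ → ℝ := fun t => ((Ω t)ᵀ * M t).trace with hf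
  have hfderiv : ∀ t, HasDerivAt f 0 t := by
    intro t
    have h : HasDerivAt (fun s => ∑ j, ∑ i, Ω s i j * M s i j)
        (∑ j, ∑ i, (Ω' t i j * M t i j + Ω t i j * ((Ω t)ᵀ * M t + M t * Ω t) i j)) t :=
      HasDerivAt.fun_sum fun j _ => HasDerivAt.fun_sum fun i _ => (hΩ t i j).fun_mul (hMderiv t i j)
    have hfun : f = fun s => ∑ j, ∑ i, Ω s i j * M s i j := by
      funext s
      simp [hf, Matrix.trace, Matrix.diag, Matrix.mul_apply, Matrix.transpose_apply]
    have hval : (∑ j, ∑ i, (Ω' t i j * M t i j + Ω t i j * ((Ω t)ᵀ * M t + M t * Ω t) i j))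
        = ((Ω' t)ᵀ * M t).trace + ((Ω t)ᵀ * ((Ω t)ᵀ * M t + M t * Ω t)).trace := by
      simp [Matrix.trace, Matrix.diag, Matrix.mul_apply, Matrix.transpose_apply,
        Finset.sum_add_distrib]
    have hzero : ((Ω' t)ᵀ * M t).trace + ((Ω t)ᵀ * ((Ω t)ᵀ * M t + M t * Ω t)).trace = 0 :=
      rigid_key Λ (Ω t) (Ω' t) (M t) hΛs (hskew t) (hJ t) (hEq t)
    rw [hfun]
    have := h
    rw [hval, hzero] at this
    exact this
  have hconst : ∀ t₁ t₂ : ℝ, f t₁ = f t₂ := by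
    intro t₁ t₂
    exact is_const_of_deriv_eq_zero (fun x => (hfderiv x).differentiableAt)
      (fun x => (hfderiv x).deriv) t₁ t₂
  intro t₁ t₂
  exact congrArg (fun x => (1 / 8 : ℝ) * x) (hconst t₁ t₂)
end

section
/- Let Q, P, Ω : ℝ → Matrix (Fin N) (Fin N) ℝ with Q, P differentiable, Ω(t) skew-symmetric, and Q'(t) = Q(t)Ω(t), P'(t) = P(t)Ω(t) for all t. Then the matrix P(t)Q(t)ᵀ is constant in t; in particular the spatial momentum P(t)Q(t)ᵀ − Q(t)P(t)ᵀ is a conserved quantity of the symmetric rigid body system. -/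
open Matrix

/-- **Conservation of spatial momentum for the symmetric rigid body system.**
If `Q' = QΩ` and `P' = PΩ` with `Ω(t)` skew-symmetric, then `P(t)Q(t)ᵀ` is
constant in `t`; in particular the spatial momentum
`P(t)Q(t)ᵀ - Q(t)P(t)ᵀ` is a conserved quantity. -/
theorem rigid_body_spatial_momentum_conserved
    {N : ℕ} (Q P Ω : ℝ → Matrix (Fin N) (Fin N) ℝ)
    (hskew : ∀ t : ℝ, (Ω t)ᵀ = -Ω t)
    (hQ : ∀ (t : ℝ) (i j : Fin N),
      HasDerivAt (fun s => Q s i j) ((Q t * Ω t) i j) t)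
    (hP : ∀ (t : ℝ) (i j : Fin N),
      HasDerivAt (fun s => P s i j) ((P t * Ω t) i j) t) :
    (∀ t₁ t₂ : ℝ, P t₁ * (Q t₁)ᵀ = P t₂ * (Q t₂)ᵀ) ∧
    (∀ t₁ t₂ : ℝ,
      P t₁ * (Q t₁)ᵀ - Q t₁ * (P t₁)ᵀ = P t₂ * (Q t₂)ᵀ - Q t₂ * (P t₂)ᵀ) := by
  have key : ∀ t₁ t₂ : ℝ, P t₁ * (Q t₁)ᵀ = P t₂ * (Q t₂)ᵀ := by
    intro t₁ t₂
    ext i j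
    have hconst : ∀ t : ℝ,
        HasDerivAt (fun s => (P s * (Q s)ᵀ) i j) 0 t := by
      intro t
      have h1 : ∀ s, (P s * (Q s)ᵀ) i j = ∑ k, P s i k * Q s j k := by
        intro s; simp [Matrix.mul_apply, Matrix.transpose_apply]
      have h2 : HasDerivAt (fun s => ∑ k, P s i k * Q s j k)
          (∑ k, ((P t * Ω t) i k * Q t j k + P t i k * (Q t * Ω t) j k)) t := by
        apply HasDerivAt.fun_sum
        intro k _
        exact (hP t i k).mul (hQ t j k)
      have hzero : (∑ k, ((P t * Ω t) i k * Q t j k + P t i k * (Q t * Ω t) j k)) = 0 := by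
        have e1 : (∑ k, (P t * Ω t) i k * Q t j k) = (P t * Ω t * (Q t)ᵀ) i j := by
          simp [Matrix.mul_apply, Matrix.transpose_apply]
        have e2 : (∑ k, P t i k * (Q t * Ω t) j k) = (P t * (Q t * Ω t)ᵀ) i j := by
          simp [Matrix.mul_apply, Matrix.transpose_apply, mul_comm]
        have e3 : P t * (Q t * Ω t)ᵀ = -(P t * Ω t * (Q t)ᵀ) := by
          rw [Matrix.transpose_mul, hskew t]
          rw [Matrix.mul_assoc]
          simp [Matrix.mul_neg, Matrix.neg_mul]
        rw [Finset.sum_add_distrib, e1, e2, e3]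
        simp
      rw [hzero] at h2
      simpa only [h1] using h2
    have := fun t => (hconst t).deriv
    have hc : (fun s => (P s * (Q s)ᵀ) i j) t₁ = (fun s => (P s * (Q s)ᵀ) i j) t₂ := by
      have hdiff : Differentiable ℝ (fun s => (P s * (Q s)ᵀ) i j) :=
        fun t => (hconst t).differentiableAt
      exact is_const_of_deriv_eq_zero hdiff this t₁ t₂
    exact hc
  refine ⟨key, fun t₁ t₂ => ?_⟩
  have key2 : Q t₁ * (P t₁)ᵀ = Q t₂ * (P t₂)ᵀ := by
    have := congrArg Matrix.transpose (key t₁ t₂)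
    simpa [Matrix.transpose_mul] using this
  rw [key t₁ t₂, key2]
end

section
/- Let K be an invertible real N×N matrix, σ > 0, and let Q, P, U : ℝ → Matrix (Fin N) (Fin N) ℝ with Q, P differentiable, U(t) skew-symmetric, and suppose the extremal equations K(Q'(t) − Q(t)U(t)) = σ²P(t) and P'(t) = P(t)U(t) hold for all t. Then M(t) := Q(t)ᵀP(t) − P(t)ᵀQ(t) satisfies M'(t) = M(t)U(t) − U(t)M(t) + σ²·P(t)ᵀ(K⁻ᵀ − K⁻¹)P(t), where K⁻ᵀ denotes the transpose of K⁻¹. -/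
open Matrix

lemma hasDerivAt_mul_entry {N : ℕ} {A B : ℝ → Matrix (Fin N) (Fin N) ℝ}
    {A' B' : Matrix (Fin N) (Fin N) ℝ} {t : ℝ}
    (hA : ∀ i j, HasDerivAt (fun s => A s i j) (A' i j) t)
    (hB : ∀ i j, HasDerivAt (fun s => B s i j) (B' i j) t) (i j : Fin N) :
    HasDerivAt (fun s => (A s * B s) i j) ((A' * B t + A t * B') i j) t := by
  simp only [Matrix.mul_apply, Matrix.add_apply]
  rw [← Finset.sum_add_distrib]
  refine HasDerivAt.fun_sum fun k _ => ?_
  simpa using (hA i k).fun_mul (hB k j)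

/-- **Momentum evolution for the rigid-body optimization (metamorphosis)
extremals.**  If `K(Q' - QU) = σ²P` and `P' = PU` with `U(t)` skew-symmetric
and `K` invertible, then `M := QᵀP - PᵀQ` satisfies
`M' = MU - UM + σ²·Pᵀ(K⁻ᵀ - K⁻¹)P`, where `K⁻ᵀ = (K⁻¹)ᵀ`. -/
theorem metamorphosis_rigid_body_momentum_evolution
    {N : ℕ} (K : Matrix (Fin N) (Fin N) ℝ) (hK : IsUnit K)
    (σ : ℝ) (hσ : 0 < σ)
    (Q P U Q' : ℝ → Matrix (Fin N) (Fin N) ℝ)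
    (hskew : ∀ t : ℝ, (U t)ᵀ = -U t)
    (hQ : ∀ (t : ℝ) (i j : Fin N),
      HasDerivAt (fun s => Q s i j) (Q' t i j) t)
    (hKeq : ∀ t : ℝ, K * (Q' t - Q t * U t) = σ ^ 2 • P t)
    (hP : ∀ (t : ℝ) (i j : Fin N),
      HasDerivAt (fun s => P s i j) ((P t * U t) i j) t) :
    ∀ (t : ℝ) (i j : Fin N),
      HasDerivAt (fun s => ((Q s)ᵀ * P s - (P s)ᵀ * Q s) i j)
        ((((Q t)ᵀ * P t - (P t)ᵀ * Q t) * U t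
          - U t * ((Q t)ᵀ * P t - (P t)ᵀ * Q t)
          + σ ^ 2 • ((P t)ᵀ * ((K⁻¹)ᵀ - K⁻¹) * P t)) i j) t := by
  intro t i j
  have hKdet : IsUnit K.det := (Matrix.isUnit_iff_isUnit_det K).mp hK
  -- Solve for Q' t
  have hsub : Q' t - Q t * U t = σ ^ 2 • (K⁻¹ * P t) := by
    have h := congrArg (fun M => K⁻¹ * M) (hKeq t)
    simpa [Matrix.nonsing_inv_mul_cancel_left K _ hKdet, Matrix.mul_smul] using h
  have hQ' : Q' t = Q t * U t + σ ^ 2 • (K⁻¹ * P t) := by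
    rw [← hsub]; abel
  have hQt : ∀ i j, HasDerivAt (fun s => (Q s)ᵀ i j) ((Q' t)ᵀ i j) t := by
    intro i j
    simpa [Matrix.transpose_apply] using hQ t j i
  have hPt : ∀ i j, HasDerivAt (fun s => (P s)ᵀ i j) ((P t * U t)ᵀ i j) t := by
    intro i j
    simpa [Matrix.transpose_apply] using hP t j i
  have hPe : ∀ i j, HasDerivAt (fun s => P s i j) ((P t * U t) i j) t := hP t
  have hQe : ∀ i j, HasDerivAt (fun s => Q s i j) ((Q' t) i j) t := hQ t
  have h1 := hasDerivAt_mul_entry hQt hPe i j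
  have h2 := hasDerivAt_mul_entry hPt hQe i j
  have hder := h1.fun_sub h2
  have key : ((Q' t)ᵀ * P t + (Q t)ᵀ * (P t * U t))
      - ((P t * U t)ᵀ * Q t + (P t)ᵀ * Q' t)
      = ((Q t)ᵀ * P t - (P t)ᵀ * Q t) * U t
          - U t * ((Q t)ᵀ * P t - (P t)ᵀ * Q t)
          + σ ^ 2 • ((P t)ᵀ * ((K⁻¹)ᵀ - K⁻¹) * P t) := by
    simp only [hQ', Matrix.transpose_add, Matrix.transpose_mul, Matrix.transpose_smul,
      hskew, Matrix.mul_add, Matrix.add_mul, Matrix.sub_mul, Matrix.mul_sub,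
      Matrix.mul_smul, Matrix.smul_mul, Matrix.neg_mul, Matrix.mul_neg,
      smul_sub, Matrix.mul_assoc]
    abel
  have : HasDerivAt (fun s => ((Q s)ᵀ * P s - (P s)ᵀ * Q s) i j)
      ((((Q' t)ᵀ * P t + (Q t)ᵀ * (P t * U t))
        - ((P t * U t)ᵀ * Q t + (P t)ᵀ * Q' t)) i j) t := by
    simpa [Matrix.sub_apply] using hder
  rw [key] at this
  exact this
end

section
/- Let K be an invertible symmetric real N×N matrix, σ > 0, and let Q, P, U : ℝ → Matrix (Fin N) (Fin N) ℝ with Q, P differentiable, U(t) skew-symmetric, K(Q'(t) − Q(t)U(t)) = σ²P(t) and P'(t) = P(t)U(t) for all t. Then M(t) := Q(t)ᵀP(t) − P(t)ᵀQ(t) satisfies the rigid body equation M'(t) = M(t)U(t) − U(t)M(t) for all t and for every value of σ² > 0. Hence the optimization (metamorphosis) problem for the SO(N) rigid body yields the same rigid body momentum equation Ṁ = [M, U] as the exactly constrained optimal control problem, independently of the tolerance σ. -/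
open Matrix

/-- **The metamorphosis optimization problem for the SO(N) rigid body yields
the rigid body equation, independently of the tolerance σ.**  If `K` is
invertible and symmetric, `K(Q' - QU) = σ²P` and `P' = PU` with `U(t)`
skew-symmetric, then `M := QᵀP - PᵀQ` satisfies `M' = MU - UM = [M, U]` for
every value of `σ² > 0` — the same momentum equation as in the exactly
constrained optimal control problem. -/
theorem metamorphosis_rigid_body_same_equation
    {N : ℕ} (K : Matrix (Fin N) (Fin N) ℝ) (hK : IsUnit K) (hKsym : Kᵀ = K)
    (σ : ℝ) (hσ : 0 < σ)
    (Q P U Q' : ℝ → Matrix (Fin N) (Fin N) ℝ)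
    (hskew : ∀ t : ℝ, (U t)ᵀ = -U t)
    (hQ : ∀ (t : ℝ) (i j : Fin N),
      HasDerivAt (fun s => Q s i j) (Q' t i j) t)
    (hKeq : ∀ t : ℝ, K * (Q' t - Q t * U t) = σ ^ 2 • P t)
    (hP : ∀ (t : ℝ) (i j : Fin N),
      HasDerivAt (fun s => P s i j) ((P t * U t) i j) t) :
    ∀ (t : ℝ) (i j : Fin N),
      HasDerivAt (fun s => ((Q s)ᵀ * P s - (P s)ᵀ * Q s) i j)
        ((((Q t)ᵀ * P t - (P t)ᵀ * Q t) * U t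
          - U t * ((Q t)ᵀ * P t - (P t)ᵀ * Q t)) i j) t := by
  intro t i j
  have hKdet : IsUnit K.det := (Matrix.isUnit_iff_isUnit_det K).mp hK
  have hKinv : K⁻¹ * K = 1 := Matrix.nonsing_inv_mul K hKdet
  have hKinvT : (K⁻¹)ᵀ = K⁻¹ := by
    rw [Matrix.transpose_nonsing_inv, hKsym]
  -- Solve for Q'
  have hQ' : Q' t = Q t * U t + σ ^ 2 • (K⁻¹ * P t) := by
    have h := congrArg (fun A => K⁻¹ * A) (hKeq t)
    simp only [← Matrix.mul_assoc, hKinv, Matrix.one_mul, Matrix.mul_smul] at h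
    have : Q' t - Q t * U t = σ ^ 2 • (K⁻¹ * P t) := h
    linear_combination (norm := abel) this
  -- the matrix-level identity for the derivative value
  have key : (Q' t)ᵀ * P t + (Q t)ᵀ * (P t * U t)
      - ((P t * U t)ᵀ * Q t + (P t)ᵀ * Q' t)
      = ((Q t)ᵀ * P t - (P t)ᵀ * Q t) * U t
          - U t * ((Q t)ᵀ * P t - (P t)ᵀ * Q t) := by
    rw [hQ']
    simp only [Matrix.transpose_add, Matrix.transpose_mul, Matrix.transpose_smul,
      hskew, hKinvT]
    simp only [Matrix.smul_mul, Matrix.mul_smul, Matrix.add_mul, Matrix.mul_add,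
      Matrix.sub_mul, Matrix.mul_sub, Matrix.neg_mul, Matrix.mul_neg, Matrix.mul_assoc]
    abel
  -- entrywise derivative
  have hentry : ∀ s, ((Q s)ᵀ * P s - (P s)ᵀ * Q s) i j
      = (∑ k, Q s k i * P s k j) - ∑ k, P s k i * Q s k j := by
    intro s
    simp [Matrix.sub_apply, Matrix.mul_apply, Matrix.transpose_apply]
  have hder : HasDerivAt (fun s => ((Q s)ᵀ * P s - (P s)ᵀ * Q s) i j)
      (((Q' t)ᵀ * P t + (Q t)ᵀ * (P t * U t)
        - ((P t * U t)ᵀ * Q t + (P t)ᵀ * Q' t)) i j) t := by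
    have h1 : HasDerivAt (fun s => (∑ k, Q s k i * P s k j) - ∑ k, P s k i * Q s k j)
        ((∑ k, (Q' t k i * P t k j + Q t k i * (P t * U t) k j))
          - ∑ k, ((P t * U t) k i * Q t k j + P t k i * Q' t k j)) t := by
      exact (HasDerivAt.fun_sum fun k _ => (hQ t k i).mul (hP t k j)).sub
        (HasDerivAt.fun_sum fun k _ => (hP t k i).mul (hQ t k j))
    have h2 := h1.congr_of_eventuallyEq (Filter.Eventually.of_forall hentry)
    convert h2 using 1
    · rfl
    · rfl
    simp [Matrix.sub_apply, Matrix.add_apply, Matrix.mul_apply, Matrix.transpose_apply,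
      Finset.sum_add_distrib]
    exact Finset.sum_congr rfl fun x _ =>
      congrArg (· * Q t x j) (Finset.sum_congr rfl fun y _ => mul_comm _ _)
  rw [key] at hder
  exact hder
end

section
/- Let n ≥ 1 and suppose u : ℝ × (Fin n → ℝ) → (Fin n → ℝ), π, l : ℝ × (Fin n → ℝ) → (Fin n → ℝ), and k : ℝ × (Fin n → ℝ) → ℝ are twice continuously differentiable and satisfy, at every (t,x): (i) the Clebsch representation u_i = −Σ_a π_a ∂_i l_a − ∂_i k for each i; (ii) ∂ₜπ_a + Σ_j u_j ∂_j π_a = 0 for each a; (iii) ∂ₜl_a + Σ_j u_j ∂_j l_a = 0 for each a. Then u satisfies the Euler fluid momentum equation: for each component i and every (t,x), ∂ₜu_i + Σ_j u_j ∂_j u_i = −∂_i p, where p := ∂ₜk + Σ_j u_j ∂_j k + |u|²/2. -/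
section
variable {E F : Type*} [NormedAddCommGroup E] [NormedSpace ℝ E]
  [NormedAddCommGroup F] [NormedSpace ℝ F] {f : E → F}

lemma aux_diff_fderiv_apply (hf : ContDiff ℝ 2 f) (v : E) :
    Differentiable ℝ (fun q => fderiv ℝ f q v) := by
  have h1 : Differentiable ℝ (fderiv ℝ f) :=
    (hf.fderiv_right (m := 1) (by norm_num)).differentiable one_ne_zero
  exact fun x => ((ContinuousLinearMap.apply ℝ F v).differentiableAt).comp x (h1 x)

lemma aux_fderiv_fderiv_apply (hf : ContDiff ℝ 2 f) (p v w : E) :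
    fderiv ℝ (fun q => fderiv ℝ f q v) p w = fderiv ℝ (fderiv ℝ f) p w v := by
  have h1 : DifferentiableAt ℝ (fderiv ℝ f) p :=
    ((hf.fderiv_right (m := 1) (by norm_num)).differentiable one_ne_zero) p
  have h2 := ((ContinuousLinearMap.apply ℝ F v).hasFDerivAt).comp p h1.hasFDerivAt
  have h3 : HasFDerivAt (fun q => fderiv ℝ f q v)
      (((ContinuousLinearMap.apply ℝ F) v).comp (fderiv ℝ (fderiv ℝ f) p)) p := h2
  rw [h3.fderiv]; rfl

lemma aux_schwarz (hf : ContDiff ℝ 2 f) (p v w : E) :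
    fderiv ℝ (fun q => fderiv ℝ f q v) p w = fderiv ℝ (fun q => fderiv ℝ f q w) p v := by
  rw [aux_fderiv_fderiv_apply hf, aux_fderiv_fderiv_apply hf]
  exact (hf.contDiffAt.isSymmSndFDerivAt (by norm_num)) w v
end

lemma aux_key_algebra {n : ℕ} (A La DTpi DU U Dk Sk SlT : Fin n → ℝ) (SkT : ℝ)
    (Dpi DL Sl : Fin n → Fin n → ℝ)
    (F1 : ∀ a, DTpi a + ∑ j, U j * Dpi a j = 0)
    (F2 : ∀ a, SlT a + ∑ j, (DU j * DL a j + U j * Sl a j) = 0)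
    (F3 : ∀ j, U j = -∑ a, A a * DL a j - Dk j) :
    (-(∑ a, (DTpi a * La a + A a * SlT a)) - SkT)
      + ∑ j, U j * (-(∑ a, (Dpi a j * La a + A a * Sl a j)) - Sk j)
    = -(SkT + ∑ j, (DU j * Dk j + U j * Sk j) + (∑ j, 2 * U j * DU j) / 2) := by
  have e1 : ∑ j, U j * (-(∑ a, (Dpi a j * La a + A a * Sl a j)) - Sk j)
      = -(∑ j, ∑ a, (U j * (Dpi a j * La a) + U j * (A a * Sl a j))) - ∑ j, U j * Sk j := by
    rw [← Finset.sum_neg_distrib, ← Finset.sum_sub_distrib]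
    refine Finset.sum_congr rfl fun j _ => ?_
    simp only [mul_sub, mul_neg, Finset.mul_sum, mul_add]
  have e2 : ∑ j, ∑ a, (U j * (Dpi a j * La a) + U j * (A a * Sl a j))
      = ∑ a, (∑ j, U j * Dpi a j) * La a + ∑ a, A a * ∑ j, U j * Sl a j := by
    rw [Finset.sum_comm, ← Finset.sum_add_distrib]
    refine Finset.sum_congr rfl fun a _ => ?_
    rw [Finset.sum_add_distrib, Finset.sum_mul, Finset.mul_sum]
    congr 1 <;> exact Finset.sum_congr rfl fun j _ => by ring
  have e3 : ∑ a, DTpi a * La a + ∑ a, (∑ j, U j * Dpi a j) * La a = 0 := by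
    rw [← Finset.sum_add_distrib]
    exact Finset.sum_eq_zero fun a _ => by rw [← add_mul, F1 a, zero_mul]
  have e4 : ∑ a, A a * SlT a + ∑ a, A a * ∑ j, U j * Sl a j
      = -∑ a, A a * ∑ j, DU j * DL a j := by
    rw [← Finset.sum_add_distrib, ← Finset.sum_neg_distrib]
    refine Finset.sum_congr rfl fun a _ => ?_
    have h2 := F2 a
    rw [Finset.sum_add_distrib] at h2
    have h : SlT a + ∑ j, U j * Sl a j = -∑ j, DU j * DL a j := by linarith
    rw [← mul_add, h]; ring
  have e5 : ∑ a, A a * ∑ j, DU j * DL a j = ∑ j, DU j * (-U j - Dk j) := by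
    have : ∀ a, A a * ∑ j, DU j * DL a j = ∑ j, DU j * (A a * DL a j) := by
      intro a; rw [Finset.mul_sum]; exact Finset.sum_congr rfl fun j _ => by ring
    simp only [this]
    rw [Finset.sum_comm]
    refine Finset.sum_congr rfl fun j _ => ?_
    rw [← Finset.mul_sum]
    have := F3 j
    have h : ∑ a, A a * DL a j = -U j - Dk j := by linarith
    rw [h]
  have e6 : ∑ j, DU j * (-U j - Dk j) = -∑ j, U j * DU j - ∑ j, DU j * Dk j := by
    have : ∀ j, DU j * (-U j - Dk j) = -(U j * DU j) - DU j * Dk j := fun j => by ring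
    simp only [this]
    rw [Finset.sum_sub_distrib, Finset.sum_neg_distrib]
  have e7 : ∑ j, 2 * U j * DU j = 2 * ∑ j, U j * DU j := by
    rw [Finset.mul_sum]; exact Finset.sum_congr rfl fun j _ => by ring
  have e8 : ∑ a, (DTpi a * La a + A a * SlT a)
      = ∑ a, DTpi a * La a + ∑ a, A a * SlT a := Finset.sum_add_distrib
  have e9 : ∑ j, (DU j * Dk j + U j * Sk j)
      = ∑ j, DU j * Dk j + ∑ j, U j * Sk j := Finset.sum_add_distrib
  rw [e1, e2, e8, e9, e7]
  linarith [e3, e4, e5, e6]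



/-- **The Clebsch representation yields Euler's fluid equations.**
Suppose `u = -π_a ∇l_a - ∇k` (Clebsch representation) with both Clebsch
variables advected by the flow, `Dπ/Dt = 0 = Dl/Dt`.  Then `u` satisfies the
Euler fluid momentum equation `∂ₜu + (u·∇)u = -∇p` with pressure
`p = Dk/Dt + |u|²/2`.  Here `∂ₜf = fderiv f (1,0)` and
`∂ᵢf = fderiv f (0, eᵢ)`. -/
theorem clebsch_gives_euler_fluid_equations
    {n : ℕ} (hn : 1 ≤ n)
    (u π l : ℝ × (Fin n → ℝ) → (Fin n → ℝ))
    (k : ℝ × (Fin n → ℝ) → ℝ)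
    (hu : ContDiff ℝ 2 u) (hπ : ContDiff ℝ 2 π)
    (hl : ContDiff ℝ 2 l) (hk : ContDiff ℝ 2 k)
    (hclebsch : ∀ (p : ℝ × (Fin n → ℝ)) (i : Fin n),
      u p i = -(∑ a, π p a * fderiv ℝ (fun q => l q a) p (0, Pi.single i 1))
              - fderiv ℝ k p (0, Pi.single i 1))
    (hadvπ : ∀ (p : ℝ × (Fin n → ℝ)) (a : Fin n),
      fderiv ℝ (fun q => π q a) p (1, 0)
        + ∑ j, u p j * fderiv ℝ (fun q => π q a) p (0, Pi.single j 1) = 0)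
    (hadvl : ∀ (p : ℝ × (Fin n → ℝ)) (a : Fin n),
      fderiv ℝ (fun q => l q a) p (1, 0)
        + ∑ j, u p j * fderiv ℝ (fun q => l q a) p (0, Pi.single j 1) = 0) :
    ∀ (p : ℝ × (Fin n → ℝ)) (i : Fin n),
      fderiv ℝ (fun q => u q i) p (1, 0)
        + ∑ j, u p j * fderiv ℝ (fun q => u q i) p (0, Pi.single j 1)
      = - fderiv ℝ (fun q =>
            fderiv ℝ k q (1, 0)
              + ∑ j, u q j * fderiv ℝ k q (0, Pi.single j 1)
              + (∑ j, u q j ^ 2) / 2) p (0, Pi.single i 1) := by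
  intro P i
  -- component smoothness
  have hu2 : ∀ j, ContDiff ℝ 2 (fun q => u q j) := fun j => contDiff_pi.mp hu j
  have hπ2 : ∀ a, ContDiff ℝ 2 (fun q => π q a) := fun a => contDiff_pi.mp hπ a
  have hl2 : ∀ a, ContDiff ℝ 2 (fun q => l q a) := fun a => contDiff_pi.mp hl a
  have hud : ∀ j, Differentiable ℝ (fun q => u q j) :=
    fun j => (hu2 j).differentiable (by norm_num)
  have hπd : ∀ a, Differentiable ℝ (fun q => π q a) :=
    fun a => (hπ2 a).differentiable (by norm_num)
  -- Expansion of derivatives of u i via Clebsch representation and Schwarz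
  have hce : (fun q => u q i) = (fun q =>
      -(∑ a, π q a * fderiv ℝ (fun q' => l q' a) q (0, Pi.single i 1))
       - fderiv ℝ k q (0, Pi.single i 1)) := funext fun q => hclebsch q i
  have expand : ∀ w : ℝ × (Fin n → ℝ), fderiv ℝ (fun q => u q i) P w =
      -(∑ a, (fderiv ℝ (fun q => π q a) P w * fderiv ℝ (fun q => l q a) P (0, Pi.single i 1)
          + π P a * fderiv ℝ (fun q => fderiv ℝ (fun q' => l q' a) q w) P (0, Pi.single i 1)))
      - fderiv ℝ (fun q => fderiv ℝ k q w) P (0, Pi.single i 1) := by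
    intro w
    rw [hce]
    have d1 : ∀ a : Fin n, DifferentiableAt ℝ
        (fun q => π q a * fderiv ℝ (fun q' => l q' a) q (0, Pi.single i 1)) P :=
      fun a => ((hπd a) P).mul ((aux_diff_fderiv_apply (hl2 a) _) P)
    rw [fderiv_fun_sub (DifferentiableAt.fun_neg (DifferentiableAt.fun_sum fun a _ => d1 a))
      ((aux_diff_fderiv_apply hk _) P), fderiv_fun_neg, fderiv_fun_sum (fun a _ => d1 a)]
    simp only [ContinuousLinearMap.sub_apply, ContinuousLinearMap.neg_apply,
      ContinuousLinearMap.sum_apply]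
    rw [aux_schwarz hk]
    congr 2
    refine Finset.sum_congr rfl fun a _ => ?_
    rw [fderiv_fun_mul ((hπd a) P) ((aux_diff_fderiv_apply (hl2 a) _) P)]
    simp only [ContinuousLinearMap.add_apply, ContinuousLinearMap.smul_apply, smul_eq_mul]
    rw [aux_schwarz (hl2 a)]
    ring
  -- differentiated advection equation for l
  have expand2 : ∀ a : Fin n,
      fderiv ℝ (fun q => fderiv ℝ (fun q' => l q' a) q (1, 0)) P (0, Pi.single i 1)
        + ∑ j, (fderiv ℝ (fun q => u q j) P (0, Pi.single i 1)
              * fderiv ℝ (fun q => l q a) P (0, Pi.single j 1)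
            + u P j * fderiv ℝ (fun q => fderiv ℝ (fun q' => l q' a) q (0, Pi.single j 1))
                P (0, Pi.single i 1)) = 0 := by
    intro a
    have hGa : (fun q => fderiv ℝ (fun q' => l q' a) q (1, 0)
        + ∑ j, u q j * fderiv ℝ (fun q' => l q' a) q (0, Pi.single j 1))
        = (fun _ => (0 : ℝ)) := funext fun q => hadvl q a
    have dA : DifferentiableAt ℝ (fun q => fderiv ℝ (fun q' => l q' a) q (1, 0)) P :=
      (aux_diff_fderiv_apply (hl2 a) _) P
    have dB : ∀ j : Fin n, DifferentiableAt ℝ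
        (fun q => u q j * fderiv ℝ (fun q' => l q' a) q (0, Pi.single j 1)) P :=
      fun j => ((hud j) P).mul ((aux_diff_fderiv_apply (hl2 a) _) P)
    have key : fderiv ℝ (fun q => fderiv ℝ (fun q' => l q' a) q (1, 0)
        + ∑ j, u q j * fderiv ℝ (fun q' => l q' a) q (0, Pi.single j 1)) P (0, Pi.single i 1)
        = fderiv ℝ (fun q => fderiv ℝ (fun q' => l q' a) q (1, 0)) P (0, Pi.single i 1)
          + ∑ j, (fderiv ℝ (fun q => u q j) P (0, Pi.single i 1)
              * fderiv ℝ (fun q => l q a) P (0, Pi.single j 1)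
            + u P j * fderiv ℝ (fun q => fderiv ℝ (fun q' => l q' a) q (0, Pi.single j 1))
                P (0, Pi.single i 1)) := by
      rw [fderiv_fun_add dA (DifferentiableAt.fun_sum fun j _ => dB j),
        ContinuousLinearMap.add_apply, fderiv_fun_sum (fun j _ => dB j),
        ContinuousLinearMap.sum_apply]
      congr 1
      refine Finset.sum_congr rfl fun j _ => ?_
      rw [fderiv_fun_mul ((hud j) P) ((aux_diff_fderiv_apply (hl2 a) _) P)]
      simp only [ContinuousLinearMap.add_apply, ContinuousLinearMap.smul_apply, smul_eq_mul]
      ring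
    rw [← key, hGa]
    simp
  -- expansion of the pressure gradient
  have expand3 : fderiv ℝ (fun q =>
        fderiv ℝ k q (1, 0)
          + ∑ j, u q j * fderiv ℝ k q (0, Pi.single j 1)
          + (∑ j, u q j ^ 2) / 2) P (0, Pi.single i 1)
      = fderiv ℝ (fun q => fderiv ℝ k q (1, 0)) P (0, Pi.single i 1)
        + ∑ j, (fderiv ℝ (fun q => u q j) P (0, Pi.single i 1)
              * fderiv ℝ k P (0, Pi.single j 1)
            + u P j * fderiv ℝ (fun q => fderiv ℝ k q (0, Pi.single j 1)) P (0, Pi.single i 1))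
        + (∑ j, 2 * u P j * fderiv ℝ (fun q => u q j) P (0, Pi.single i 1)) / 2 := by
    have dK1 : DifferentiableAt ℝ (fun q => fderiv ℝ k q (1, 0)) P :=
      (aux_diff_fderiv_apply hk _) P
    have dK2 : ∀ j : Fin n, DifferentiableAt ℝ
        (fun q => u q j * fderiv ℝ k q (0, Pi.single j 1)) P :=
      fun j => ((hud j) P).mul ((aux_diff_fderiv_apply hk _) P)
    have dK3' : DifferentiableAt ℝ (fun q => ∑ j, u q j ^ 2) P :=
      DifferentiableAt.fun_sum fun j _ => ((hud j) P).pow 2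
    have hdivf : (fun q : ℝ × (Fin n → ℝ) => (∑ j, u q j ^ 2) / 2)
        = fun q => (∑ j, u q j ^ 2) * (2 : ℝ)⁻¹ := funext fun q => div_eq_mul_inv _ _
    have dK3 : DifferentiableAt ℝ (fun q => (∑ j, u q j ^ 2) / 2) P := by
      rw [hdivf]; exact dK3'.mul_const _
    rw [fderiv_fun_add (dK1.fun_add (DifferentiableAt.fun_sum fun j _ => dK2 j)) dK3,
      ContinuousLinearMap.add_apply,
      fderiv_fun_add dK1 (DifferentiableAt.fun_sum fun j _ => dK2 j),
      ContinuousLinearMap.add_apply,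
      fderiv_fun_sum (fun j _ => dK2 j), ContinuousLinearMap.sum_apply]
    congr 1
    · congr 1
      refine Finset.sum_congr rfl fun j _ => ?_
      rw [fderiv_fun_mul ((hud j) P) ((aux_diff_fderiv_apply hk _) P)]
      simp only [ContinuousLinearMap.add_apply, ContinuousLinearMap.smul_apply, smul_eq_mul]
      ring
    · rw [hdivf, fderiv_mul_const dK3' ((2:ℝ)⁻¹), ContinuousLinearMap.smul_apply,
        fderiv_fun_sum (fun j _ => ((hud j) P).fun_pow 2), ContinuousLinearMap.sum_apply,
        smul_eq_mul, mul_comm, ← div_eq_mul_inv]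
      congr 1
      refine Finset.sum_congr rfl fun j _ => ?_
      have hsq : (fun q => u q j ^ 2) = fun q => u q j * u q j :=
        funext fun q => by rw [pow_two]
      rw [hsq, fderiv_fun_mul ((hud j) P) ((hud j) P)]
      simp only [ContinuousLinearMap.add_apply, ContinuousLinearMap.smul_apply, smul_eq_mul]
      ring
  have hsum : ∑ j, u P j * fderiv ℝ (fun q => u q i) P (0, Pi.single j 1)
      = ∑ j, u P j *
        (-(∑ a, (fderiv ℝ (fun q => π q a) P (0, Pi.single j 1)
              * fderiv ℝ (fun q => l q a) P (0, Pi.single i 1)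
            + π P a * fderiv ℝ (fun q => fderiv ℝ (fun q' => l q' a) q (0, Pi.single j 1))
                P (0, Pi.single i 1)))
          - fderiv ℝ (fun q => fderiv ℝ k q (0, Pi.single j 1)) P (0, Pi.single i 1)) :=
    Finset.sum_congr rfl fun j _ => by rw [expand _]
  rw [expand (1, 0), hsum, expand3]
  exact aux_key_algebra
    (fun a => π P a)
    (fun a => fderiv ℝ (fun q => l q a) P (0, Pi.single i 1))
    (fun a => fderiv ℝ (fun q => π q a) P (1, 0))
    (fun j => fderiv ℝ (fun q => u q j) P (0, Pi.single i 1))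
    (fun j => u P j)
    (fun j => fderiv ℝ k P (0, Pi.single j 1))
    (fun j => fderiv ℝ (fun q => fderiv ℝ k q (0, Pi.single j 1)) P (0, Pi.single i 1))
    (fun a => fderiv ℝ (fun q => fderiv ℝ (fun q' => l q' a) q (1, 0)) P (0, Pi.single i 1))
    (fderiv ℝ (fun q => fderiv ℝ k q (1, 0)) P (0, Pi.single i 1))
    (fun a j => fderiv ℝ (fun q => π q a) P (0, Pi.single j 1))
    (fun a j => fderiv ℝ (fun q => l q a) P (0, Pi.single j 1))
    (fun a j => fderiv ℝ (fun q => fderiv ℝ (fun q' => l q' a) q (0, Pi.single j 1))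
        P (0, Pi.single i 1))
    (hadvπ P) expand2 (hclebsch P)
end

section
/- Let n ≥ 1, σ ∈ ℝ, and suppose u : ℝ × (Fin n → ℝ) → (Fin n → ℝ), π, l : ℝ × (Fin n → ℝ) → (Fin n → ℝ), and k : ℝ × (Fin n → ℝ) → ℝ are twice continuously differentiable and satisfy, at every (t,x): (i) u_i = −Σ_a π_a ∂_i l_a − ∂_i k for each i; (ii) ∂ₜπ_a + Σ_j u_j ∂_j π_a = 0 for each a; (iii) the metamorphosis relation ∂ₜl_a + Σ_j u_j ∂_j l_a = σ² π_a for each a. Then u still satisfies the Euler fluid momentum equation: for each i and every (t,x), ∂ₜu_i + Σ_j u_j ∂_j u_i = −∂_i p, where now p := ∂ₜk + Σ_j u_j ∂_j k + |u|²/2 + σ²|π|²/2. In particular the resulting momentum equation has the same Euler form for every value of σ², the penalty σ²π appearing only as a gauge transformation (redefinition) of the pressure. -/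
section Helpers
variable {E : Type*} [NormedAddCommGroup E] [NormedSpace ℝ E]

lemma MGE.contDiff_one_fderiv {f : E → ℝ} (hf : ContDiff ℝ 2 f) :
    ContDiff ℝ 1 (fderiv ℝ f) := hf.fderiv_right (by norm_num)

lemma MGE.diff_dirDeriv {f : E → ℝ} (hf : ContDiff ℝ 2 f) (w : E) :
    Differentiable ℝ (fun q => fderiv ℝ f q w) :=
  (ContinuousLinearMap.apply ℝ ℝ w).differentiable.comp
    ((MGE.contDiff_one_fderiv hf).differentiable one_ne_zero)

lemma MGE.fderiv_dirDeriv {f : E → ℝ} (hf : ContDiff ℝ 2 f) (p v w : E) :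
    fderiv ℝ (fun q => fderiv ℝ f q w) p v = fderiv ℝ (fderiv ℝ f) p v w := by
  have h1 : DifferentiableAt ℝ (fderiv ℝ f) p :=
    ((MGE.contDiff_one_fderiv hf).differentiable one_ne_zero) p
  rw [show (fun q => fderiv ℝ f q w) = fun q => (fderiv ℝ f q) ((fun _ : E => w) q) from rfl,
      fderiv_clm_apply h1 (differentiableAt_const w)]
  simp

lemma MGE.fderiv_swap {f : E → ℝ} (hf : ContDiff ℝ 2 f) (p v w : E) :
    fderiv ℝ (fun q => fderiv ℝ f q w) p v = fderiv ℝ (fun q => fderiv ℝ f q v) p w := by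
  rw [MGE.fderiv_dirDeriv hf, MGE.fderiv_dirDeriv hf]
  exact hf.contDiffAt.isSymmSndFDerivAt (by norm_num) v w

end Helpers

lemma MGE.key {n : ℕ} (i : Fin n) (σ2 K0 : ℝ)
    (P U dk duu dπ0 L0 KK : Fin n → ℝ)
    (dπ dl LL : Fin n → Fin n → ℝ)
    (hA : ∀ a, dπ0 a + ∑ j, U j * dπ a j = 0)
    (hM : ∀ a, L0 a + ∑ j, (U j * LL a j + dl a j * duu j) = σ2 * dπ a i)
    (hC : ∀ j, U j = -(∑ a, P a * dl a j) - dk j) :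
    (-(∑ a, (P a * L0 a + dl a i * dπ0 a)) - K0)
      + ∑ j, U j * (-(∑ a, (P a * LL a j + dl a i * dπ a j)) - KK j)
    = -(K0 + ∑ j, (U j * KK j + dk j * duu j)
        + 2⁻¹ * (∑ j, (U j * duu j + U j * duu j))
        + σ2 / 2 * (∑ a, (P a * dπ a i + P a * dπ a i))) := by
  have h0 : ∀ a, dπ0 a = -∑ j, U j * dπ a j := fun a => by linarith [hA a]
  have h1 : ∀ a, L0 a = σ2 * dπ a i - ∑ j, (U j * LL a j + dl a j * duu j) :=
    fun a => by linarith [hM a]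
  have per_a : ∀ a, P a * L0 a + dl a i * dπ0 a
      = σ2 * (P a * dπ a i) - (∑ j, U j * (P a * LL a j))
        - (∑ j, duu j * (P a * dl a j)) - (∑ j, U j * (dl a i * dπ a j)) := by
    intro a
    have hS1 : P a * (∑ j, (U j * LL a j + dl a j * duu j))
        = (∑ j, U j * (P a * LL a j)) + (∑ j, duu j * (P a * dl a j)) := by
      rw [Finset.mul_sum, ← Finset.sum_add_distrib]
      exact Finset.sum_congr rfl fun j _ => by ring
    have hT : dl a i * (∑ j, U j * dπ a j) = ∑ j, U j * (dl a i * dπ a j) := by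
      rw [Finset.mul_sum]
      exact Finset.sum_congr rfl fun j _ => by ring
    rw [h0 a, h1 a]
    linear_combination -hS1 - hT
  have e1 : ∑ a, (P a * L0 a + dl a i * dπ0 a)
      = σ2 * (∑ a, P a * dπ a i)
        - (∑ j, ∑ a, U j * (P a * LL a j))
        - (∑ j, ∑ a, duu j * (P a * dl a j))
        - (∑ j, ∑ a, U j * (dl a i * dπ a j)) := by
    rw [Finset.sum_congr rfl fun a _ => per_a a]
    rw [Finset.sum_sub_distrib, Finset.sum_sub_distrib, Finset.sum_sub_distrib,
        ← Finset.mul_sum]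
    rw [Finset.sum_comm (s := Finset.univ) (t := Finset.univ)
          (f := fun j a => U j * (P a * LL a j)),
        Finset.sum_comm (s := Finset.univ) (t := Finset.univ)
          (f := fun j a => duu j * (P a * dl a j)),
        Finset.sum_comm (s := Finset.univ) (t := Finset.univ)
          (f := fun j a => U j * (dl a i * dπ a j))]
  have e2 : ∑ j, U j * (-(∑ a, (P a * LL a j + dl a i * dπ a j)) - KK j)
      = -(∑ j, ∑ a, U j * (P a * LL a j)) - (∑ j, ∑ a, U j * (dl a i * dπ a j))
        - ∑ j, U j * KK j := by
    have hj : ∀ j, U j * (-(∑ a, (P a * LL a j + dl a i * dπ a j)) - KK j)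
        = -(∑ a, U j * (P a * LL a j)) - (∑ a, U j * (dl a i * dπ a j)) - U j * KK j := by
      intro j
      have h' : U j * (∑ a, (P a * LL a j + dl a i * dπ a j))
          = (∑ a, U j * (P a * LL a j)) + (∑ a, U j * (dl a i * dπ a j)) := by
        rw [Finset.mul_sum, ← Finset.sum_add_distrib]
        exact Finset.sum_congr rfl fun a _ => by ring
      linear_combination -h'
    rw [Finset.sum_congr rfl fun j _ => hj j, Finset.sum_sub_distrib,
        Finset.sum_sub_distrib, Finset.sum_neg_distrib]
  have e3 : ∑ j, ∑ a, duu j * (P a * dl a j)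
      = -(∑ j, U j * duu j) - ∑ j, dk j * duu j := by
    rw [← Finset.sum_neg_distrib, ← Finset.sum_sub_distrib]
    refine Finset.sum_congr rfl fun j _ => ?_
    have : ∑ a, duu j * (P a * dl a j) = duu j * ∑ a, P a * dl a j := by
      rw [Finset.mul_sum]
    rw [this, show (∑ a, P a * dl a j) = -U j - dk j from by linarith [hC j]]
    ring
  have e4 : ∑ j, (U j * KK j + dk j * duu j)
      = (∑ j, U j * KK j) + ∑ j, dk j * duu j := Finset.sum_add_distrib
  have e5 : ∑ j, (U j * duu j + U j * duu j) = 2 * ∑ j, U j * duu j := by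
    rw [Finset.mul_sum]
    exact Finset.sum_congr rfl fun j _ => by ring
  have e6 : ∑ a, (P a * dπ a i + P a * dπ a i) = 2 * ∑ a, P a * dπ a i := by
    rw [Finset.mul_sum]
    exact Finset.sum_congr rfl fun a _ => by ring
  rw [e1, e2, e4, e5, e6]
  linear_combination e3

/-- **Metamorphosis yields the same Euler fluid equations for any σ².**
Suppose `u = -π_a ∇l_a - ∇k` (Clebsch form of the momentum), `Dπ/Dt = 0`,
and the metamorphosis penalty relation `Dl/Dt = σ²π` holds.  Then `u` still
satisfies the Euler fluid momentum equation `∂ₜu + (u·∇)u = -∇p`, now with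
pressure `p = Dk/Dt + |u|²/2 + σ²|π|²/2`: the penalty appears only as a
gauge transformation (redefinition) of the pressure, for every value
of `σ²`. -/
theorem metamorphosis_gives_euler_fluid_equations
    {n : ℕ} (hn : 1 ≤ n) (σ : ℝ)
    (u π l : ℝ × (Fin n → ℝ) → (Fin n → ℝ))
    (k : ℝ × (Fin n → ℝ) → ℝ)
    (hu : ContDiff ℝ 2 u) (hπ : ContDiff ℝ 2 π)
    (hl : ContDiff ℝ 2 l) (hk : ContDiff ℝ 2 k)
    (hclebsch : ∀ (p : ℝ × (Fin n → ℝ)) (i : Fin n),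
      u p i = -(∑ a, π p a * fderiv ℝ (fun q => l q a) p (0, Pi.single i 1))
              - fderiv ℝ k p (0, Pi.single i 1))
    (hadvπ : ∀ (p : ℝ × (Fin n → ℝ)) (a : Fin n),
      fderiv ℝ (fun q => π q a) p (1, 0)
        + ∑ j, u p j * fderiv ℝ (fun q => π q a) p (0, Pi.single j 1) = 0)
    (hmeta : ∀ (p : ℝ × (Fin n → ℝ)) (a : Fin n),
      fderiv ℝ (fun q => l q a) p (1, 0)
        + ∑ j, u p j * fderiv ℝ (fun q => l q a) p (0, Pi.single j 1)
      = σ ^ 2 * π p a) :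
    ∀ (p : ℝ × (Fin n → ℝ)) (i : Fin n),
      fderiv ℝ (fun q => u q i) p (1, 0)
        + ∑ j, u p j * fderiv ℝ (fun q => u q i) p (0, Pi.single j 1)
      = - fderiv ℝ (fun q =>
            fderiv ℝ k q (1, 0)
              + ∑ j, u q j * fderiv ℝ k q (0, Pi.single j 1)
              + (∑ j, u q j ^ 2) / 2
              + σ ^ 2 * (∑ a, π q a ^ 2) / 2) p (0, Pi.single i 1) := by
  intro p i
  have hπa : ∀ a, ContDiff ℝ 2 fun q => π q a := fun a => contDiff_pi.1 hπ a
  have hla : ∀ a, ContDiff ℝ 2 fun q => l q a := fun a => contDiff_pi.1 hl a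
  have hua : ∀ j, ContDiff ℝ 2 fun q => u q j := fun j => contDiff_pi.1 hu j
  have dπa : ∀ (q) (a), DifferentiableAt ℝ (fun q => π q a) q :=
    fun q a => ((hπa a).differentiable two_ne_zero) q
  have dua : ∀ (q) (j), DifferentiableAt ℝ (fun q => u q j) q :=
    fun q j => ((hua j).differentiable two_ne_zero) q
  have hDl : ∀ (q) (a) (w : ℝ × (Fin n → ℝ)),
      DifferentiableAt ℝ (fun r => fderiv ℝ (fun q' => l q' a) r w) q :=
    fun q a w => (MGE.diff_dirDeriv (hla a) w) q
  have hDk : ∀ (q) (w : ℝ × (Fin n → ℝ)),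
      DifferentiableAt ℝ (fun r => fderiv ℝ k r w) q :=
    fun q w => (MGE.diff_dirDeriv hk w) q
  -- derivative of the Clebsch form of u_i, in canonical (swapped) form
  have hdu : ∀ v : ℝ × (Fin n → ℝ), fderiv ℝ (fun q => u q i) p v
      = -(∑ a, (π p a * fderiv ℝ (fun r => fderiv ℝ (fun q => l q a) r v) p (0, Pi.single i 1)
            + fderiv ℝ (fun q => l q a) p (0, Pi.single i 1) * fderiv ℝ (fun q => π q a) p v))
        - fderiv ℝ (fun r => fderiv ℝ k r v) p (0, Pi.single i 1) := by
    intro v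
    have h1 : (fun r => u r i)
        = fun r => -(∑ a, π r a * fderiv ℝ (fun q => l q a) r (0, Pi.single i 1))
            - fderiv ℝ k r (0, Pi.single i 1) := funext fun r => hclebsch r i
    have hterm : ∀ a : Fin n,
        fderiv ℝ (fun r => π r a * fderiv ℝ (fun q => l q a) r (0, Pi.single i 1)) p v
        = π p a * fderiv ℝ (fun r => fderiv ℝ (fun q => l q a) r v) p (0, Pi.single i 1)
          + fderiv ℝ (fun q => l q a) p (0, Pi.single i 1) * fderiv ℝ (fun q => π q a) p v := by
      intro a
      rw [fderiv_fun_mul (dπa p a) (hDl p a _)]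
      simp only [ContinuousLinearMap.add_apply, ContinuousLinearMap.smul_apply, smul_eq_mul]
      rw [MGE.fderiv_swap (hla a) p v _]
    have hsd : DifferentiableAt ℝ
        (fun r => ∑ a, π r a * fderiv ℝ (fun q => l q a) r (0, Pi.single i 1)) p :=
      DifferentiableAt.fun_sum fun a _ => (dπa p a).fun_mul (hDl p a _)
    rw [h1, fderiv_fun_sub hsd.fun_neg (hDk p _)]
    simp only [ContinuousLinearMap.sub_apply]
    rw [fderiv_fun_neg]
    simp only [ContinuousLinearMap.neg_apply]
    rw [fderiv_fun_sum (fun a _ => (dπa p a).fun_mul (hDl p a _))]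
    simp only [ContinuousLinearMap.sum_apply]
    rw [Finset.sum_congr rfl fun a _ => hterm a, MGE.fderiv_swap hk p v _]
  -- differentiated metamorphosis relation
  have hMd : ∀ a : Fin n,
      fderiv ℝ (fun r => fderiv ℝ (fun q => l q a) r (1, 0)) p (0, Pi.single i 1)
        + ∑ j, (u p j * fderiv ℝ (fun r => fderiv ℝ (fun q => l q a) r (0, Pi.single j 1)) p
              (0, Pi.single i 1)
            + fderiv ℝ (fun q => l q a) p (0, Pi.single j 1)
              * fderiv ℝ (fun q => u q j) p (0, Pi.single i 1))
      = σ ^ 2 * fderiv ℝ (fun q => π q a) p (0, Pi.single i 1) := by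
    intro a
    have h1 : (fun q => fderiv ℝ (fun q' => l q' a) q (1, 0)
          + ∑ j, u q j * fderiv ℝ (fun q' => l q' a) q (0, Pi.single j 1))
        = fun q => σ ^ 2 * π q a := funext fun q => hmeta q a
    have h2 : fderiv ℝ (fun q => fderiv ℝ (fun q' => l q' a) q (1, 0)
          + ∑ j, u q j * fderiv ℝ (fun q' => l q' a) q (0, Pi.single j 1)) p (0, Pi.single i 1)
        = fderiv ℝ (fun q => σ ^ 2 * π q a) p (0, Pi.single i 1) := by rw [h1]
    rw [fderiv_fun_add (hDl p a _) (DifferentiableAt.fun_sum fun j _ => (dua p j).fun_mul (hDl p a _)),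
        fderiv_fun_sum (fun j _ => (dua p j).fun_mul (hDl p a _)),
        fderiv_const_mul (dπa p a)] at h2
    simp only [ContinuousLinearMap.add_apply, ContinuousLinearMap.sum_apply,
      ContinuousLinearMap.smul_apply, smul_eq_mul] at h2
    rw [← h2]
    congr 1
    refine Finset.sum_congr rfl fun j _ => ?_
    rw [fderiv_fun_mul (dua p j) (hDl p a _)]
    simp only [ContinuousLinearMap.add_apply, ContinuousLinearMap.smul_apply, smul_eq_mul]
  -- rewrite the pressure function
  have hpf : (fun q : ℝ × (Fin n → ℝ) =>
        fderiv ℝ k q (1, 0)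
          + ∑ j, u q j * fderiv ℝ k q (0, Pi.single j 1)
          + (∑ j, u q j ^ 2) / 2
          + σ ^ 2 * (∑ a, π q a ^ 2) / 2)
      = fun q =>
        fderiv ℝ k q (1, 0)
          + ∑ j, u q j * fderiv ℝ k q (0, Pi.single j 1)
          + 2⁻¹ * (∑ j, u q j * u q j)
          + σ ^ 2 / 2 * (∑ a, π q a * π q a) := by
    funext q
    rw [show (∑ j, u q j ^ 2) = ∑ j, u q j * u q j from
          Finset.sum_congr rfl fun j _ => pow_two (u q j),
        show (∑ a, π q a ^ 2) = ∑ a, π q a * π q a from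
          Finset.sum_congr rfl fun a _ => pow_two (π q a)]
    ring
  -- expand the pressure gradient
  have dA : DifferentiableAt ℝ (fun q => fderiv ℝ k q ((1:ℝ), (0 : Fin n → ℝ))) p := hDk p _
  have dB : DifferentiableAt ℝ
      (fun q => ∑ j, u q j * fderiv ℝ k q (0, Pi.single j 1)) p :=
    DifferentiableAt.fun_sum fun j _ => (dua p j).fun_mul (hDk p _)
  have dC : DifferentiableAt ℝ (fun q => (2:ℝ)⁻¹ * ∑ j, u q j * u q j) p :=
    (DifferentiableAt.fun_sum fun j _ => (dua p j).fun_mul (dua p j)).const_mul _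
  have dD : DifferentiableAt ℝ (fun q => σ ^ 2 / 2 * ∑ a, π q a * π q a) p :=
    (DifferentiableAt.fun_sum fun a _ => (dπa p a).fun_mul (dπa p a)).const_mul _
  have hR : fderiv ℝ (fun q =>
        fderiv ℝ k q (1, 0)
          + ∑ j, u q j * fderiv ℝ k q (0, Pi.single j 1)
          + 2⁻¹ * (∑ j, u q j * u q j)
          + σ ^ 2 / 2 * (∑ a, π q a * π q a)) p (0, Pi.single i 1)
      = fderiv ℝ (fun r => fderiv ℝ k r (1, 0)) p (0, Pi.single i 1)
        + ∑ j, (u p j * fderiv ℝ (fun r => fderiv ℝ k r (0, Pi.single j 1)) p (0, Pi.single i 1)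
            + fderiv ℝ k p (0, Pi.single j 1) * fderiv ℝ (fun q => u q j) p (0, Pi.single i 1))
        + 2⁻¹ * (∑ j, (u p j * fderiv ℝ (fun q => u q j) p (0, Pi.single i 1)
            + u p j * fderiv ℝ (fun q => u q j) p (0, Pi.single i 1)))
        + σ ^ 2 / 2 * (∑ a, (π p a * fderiv ℝ (fun q => π q a) p (0, Pi.single i 1)
            + π p a * fderiv ℝ (fun q => π q a) p (0, Pi.single i 1))) := by
    rw [fderiv_fun_add ((dA.fun_add dB).fun_add dC) dD, fderiv_fun_add (dA.fun_add dB) dC, fderiv_fun_add dA dB]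
    simp only [ContinuousLinearMap.add_apply]
    rw [fderiv_fun_sum (fun j _ => (dua p j).fun_mul (hDk p _)),
        fderiv_const_mul (DifferentiableAt.fun_sum fun j _ => (dua p j).fun_mul (dua p j)),
        fderiv_const_mul (DifferentiableAt.fun_sum fun a _ => (dπa p a).fun_mul (dπa p a)),
        fderiv_fun_sum (fun j _ => (dua p j).fun_mul (dua p j)),
        fderiv_fun_sum (fun a _ => (dπa p a).fun_mul (dπa p a))]
    simp only [ContinuousLinearMap.add_apply, ContinuousLinearMap.sum_apply,
      ContinuousLinearMap.smul_apply, smul_eq_mul]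
    congr 1
    · congr 1
      · congr 1
        refine Finset.sum_congr rfl fun j _ => ?_
        rw [fderiv_fun_mul (dua p j) (hDk p _)]
        simp only [ContinuousLinearMap.add_apply, ContinuousLinearMap.smul_apply, smul_eq_mul]
      · congr 1
        refine Finset.sum_congr rfl fun j _ => ?_
        rw [fderiv_fun_mul (dua p j) (dua p j)]
        simp only [ContinuousLinearMap.add_apply, ContinuousLinearMap.smul_apply, smul_eq_mul]
    · congr 1
      refine Finset.sum_congr rfl fun a _ => ?_
      rw [fderiv_fun_mul (dπa p a) (dπa p a)]
      simp only [ContinuousLinearMap.add_apply, ContinuousLinearMap.smul_apply, smul_eq_mul]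
  -- rewrite the goal
  have hL2 : ∀ j : Fin n, u p j * fderiv ℝ (fun q => u q i) p (0, Pi.single j 1)
      = u p j * (-(∑ a, (π p a
            * fderiv ℝ (fun r => fderiv ℝ (fun q => l q a) r (0, Pi.single j 1)) p
              (0, Pi.single i 1)
            + fderiv ℝ (fun q => l q a) p (0, Pi.single i 1)
              * fderiv ℝ (fun q => π q a) p (0, Pi.single j 1)))
          - fderiv ℝ (fun r => fderiv ℝ k r (0, Pi.single j 1)) p (0, Pi.single i 1)) :=
    fun j => by rw [hdu (0, Pi.single j 1)]
  rw [hpf, hR, hdu (1, 0), Finset.sum_congr rfl fun j _ => hL2 j]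
  exact MGE.key i (σ ^ 2)
    (fderiv ℝ (fun r => fderiv ℝ k r (1, 0)) p (0, Pi.single i 1))
    (fun a => π p a) (fun j => u p j)
    (fun j => fderiv ℝ k p (0, Pi.single j 1))
    (fun j => fderiv ℝ (fun q => u q j) p (0, Pi.single i 1))
    (fun a => fderiv ℝ (fun q => π q a) p (1, 0))
    (fun a => fderiv ℝ (fun r => fderiv ℝ (fun q => l q a) r (1, 0)) p (0, Pi.single i 1))
    (fun j => fderiv ℝ (fun r => fderiv ℝ k r (0, Pi.single j 1)) p (0, Pi.single i 1))
    (fun a j => fderiv ℝ (fun q => π q a) p (0, Pi.single j 1))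
    (fun a j => fderiv ℝ (fun q => l q a) p (0, Pi.single j 1))
    (fun a j => fderiv ℝ (fun r => fderiv ℝ (fun q => l q a) r (0, Pi.single j 1)) p
      (0, Pi.single i 1))
    (hadvπ p) hMd (fun j => hclebsch p j)
end

section
/- Let n ≥ 1, let u : ℝ × (Fin n → ℝ) → (Fin n → ℝ) be continuously differentiable, and let g : ℝ × (Fin n → ℝ) → (Fin n → ℝ) be twice continuously differentiable with ∂ₜg(t, x) = u(t, g(t, x)) for all (t,x). Let γ : ℝ → (Fin n → ℝ) be a continuously differentiable closed curve with γ(0) = γ(1). Define the circulation C(t) := ∫₀¹ ⟨u(t, g(t, γ(s))), ∂ₛ[g(t, γ(s))]⟩ ds (Euclidean inner product on ℝⁿ). Then C is differentiable and C'(t) = ∫₀¹ ⟨(∂ₜu + (u·∇)u)(t, g(t, γ(s))), ∂ₛ[g(t, γ(s))]⟩ ds, i.e. the term (∇u)ᵀ·u contributes the exact differential of |u|²/2 around the loop and integrates to zero. -/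
open intervalIntegral

namespace Kelvin

variable {n : ℕ}

noncomputable def DS (g : ℝ × (Fin n → ℝ) → (Fin n → ℝ)) (γ : ℝ → (Fin n → ℝ)) (τ s : ℝ) :
    Fin n → ℝ := fderiv ℝ g (τ, γ s) (0, deriv γ s)

noncomputable def BB (g : ℝ × (Fin n → ℝ) → (Fin n → ℝ)) (γ : ℝ → (Fin n → ℝ)) (τ s : ℝ) :
    Fin n → ℝ := fderiv ℝ (fderiv ℝ g) (τ, γ s) (1, 0) (0, deriv γ s)

section

variable (u g : ℝ × (Fin n → ℝ) → (Fin n → ℝ)) (γ : ℝ → (Fin n → ℝ))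

noncomputable def FC (τ s : ℝ) : ℝ := ∑ i, u (τ, g (τ, γ s)) i * DS g γ τ s i

noncomputable def MAT (τ s : ℝ) : ℝ :=
  ∑ i, fderiv ℝ u (τ, g (τ, γ s)) (1, u (τ, g (τ, γ s))) i * DS g γ τ s i

noncomputable def KK (τ s : ℝ) : ℝ := ∑ i, u (τ, g (τ, γ s)) i * BB g γ τ s i

end

variable {u g : ℝ × (Fin n → ℝ) → (Fin n → ℝ)} {γ : ℝ → (Fin n → ℝ)}

/-- derivative in `s` of the advected curve -/
lemma hasDerivAt_DS (hg : ContDiff ℝ 2 g) (hγ : ContDiff ℝ 1 γ) (τ s : ℝ) :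
    HasDerivAt (fun r => g (τ, γ r)) (DS g γ τ s) s :=
  ((hg.differentiable (by norm_num) _).hasFDerivAt).comp_hasDerivAt s
    ((hasDerivAt_const s τ).prodMk ((hγ.differentiable one_ne_zero s).hasDerivAt))

lemma deriv_eq_DS (hg : ContDiff ℝ 2 g) (hγ : ContDiff ℝ 1 γ) (τ s : ℝ) :
    deriv (fun r => g (τ, γ r)) s = DS g γ τ s :=
  (hasDerivAt_DS hg hγ τ s).deriv

/-- the partial time derivative of `g` equals `u` composed with `g` -/
lemma fderiv_g_one (hg : ContDiff ℝ 2 g)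
    (hflow : ∀ (t : ℝ) (x : Fin n → ℝ),
      HasDerivAt (fun s => g (s, x)) (u (t, g (t, x))) t)
    (τ : ℝ) (x : Fin n → ℝ) :
    fderiv ℝ g (τ, x) (1, 0) = u (τ, g (τ, x)) := by
  have h1 : HasDerivAt (fun r => g (r, x)) (fderiv ℝ g (τ, x) (1, 0)) τ :=
    ((hg.differentiable (by norm_num) _).hasFDerivAt).comp_hasDerivAt τ
      ((hasDerivAt_id τ).prodMk (hasDerivAt_const τ x))
  exact h1.unique (hflow τ x)

/-- time derivative of the velocity along the flow, coordinatewise -/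
lemma hasDerivAt_u_comp (hu : ContDiff ℝ 1 u)
    (hflow : ∀ (t : ℝ) (x : Fin n → ℝ),
      HasDerivAt (fun s => g (s, x)) (u (t, g (t, x))) t)
    (t s : ℝ) :
    HasDerivAt (fun τ => u (τ, g (τ, γ s)))
      (fderiv ℝ u (t, g (t, γ s)) (1, u (t, g (t, γ s)))) t :=
  ((hu.differentiable one_ne_zero _).hasFDerivAt).comp_hasDerivAt t
    ((hasDerivAt_id t).prodMk (hflow t (γ s)))

/-- time derivative of `DS` -/
lemma hasDerivAt_DS_time (hg : ContDiff ℝ 2 g) (t s : ℝ) :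
    HasDerivAt (fun τ => DS g γ τ s) (BB g γ t s) t := by
  have hfg : ContDiff ℝ 1 (fderiv ℝ g) := hg.fderiv_right (by norm_num)
  have hA : HasDerivAt (fun τ => fderiv ℝ g (τ, γ s))
      (fderiv ℝ (fderiv ℝ g) (t, γ s) (1, 0)) t :=
    ((hfg.differentiable one_ne_zero _).hasFDerivAt).comp_hasDerivAt t
      ((hasDerivAt_id t).prodMk (hasDerivAt_const t (γ s)))
  have := hA.clm_apply (hasDerivAt_const t (((0:ℝ), deriv γ s) : ℝ × (Fin n → ℝ)))
  simpa [BB, DS] using this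

/-- time derivative of `FC` -/
lemma hasDerivAt_FC (hu : ContDiff ℝ 1 u) (hg : ContDiff ℝ 2 g)
    (hflow : ∀ (t : ℝ) (x : Fin n → ℝ),
      HasDerivAt (fun s => g (s, x)) (u (t, g (t, x))) t)
    (t s : ℝ) :
    HasDerivAt (fun τ => FC u g γ τ s) (MAT u g γ t s + KK u g γ t s) t := by
  have h : HasDerivAt (fun τ => FC u g γ τ s)
      (∑ i, (fderiv ℝ u (t, g (t, γ s)) (1, u (t, g (t, γ s))) i * DS g γ t s i
        + u (t, g (t, γ s)) i * BB g γ t s i)) t := by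
    refine HasDerivAt.fun_sum fun i _ => ?_
    exact ((hasDerivAt_pi.1 (hasDerivAt_u_comp hu hflow t s)) i).mul
      ((hasDerivAt_pi.1 (hasDerivAt_DS_time hg t s)) i)
  simpa [MAT, KK, Finset.sum_add_distrib] using h

end Kelvin

namespace Kelvin
variable {n : ℕ} {u g : ℝ × (Fin n → ℝ) → (Fin n → ℝ)} {γ : ℝ → (Fin n → ℝ)}

lemma cont_pair (hg : ContDiff ℝ 2 g) (hγ : ContDiff ℝ 1 γ) :
    Continuous fun p : ℝ × ℝ => ((p.1, γ p.2) : ℝ × (Fin n → ℝ)) :=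
  continuous_fst.prodMk (hγ.continuous.comp continuous_snd)

lemma cont_ucomp (hu : ContDiff ℝ 1 u) (hg : ContDiff ℝ 2 g) (hγ : ContDiff ℝ 1 γ) :
    Continuous fun p : ℝ × ℝ => u (p.1, g (p.1, γ p.2)) :=
  hu.continuous.comp (continuous_fst.prodMk (hg.continuous.comp (cont_pair hg hγ)))

lemma cont_DS (hg : ContDiff ℝ 2 g) (hγ : ContDiff ℝ 1 γ) :
    Continuous fun p : ℝ × ℝ => DS g γ p.1 p.2 := by
  have cA : Continuous fun p : ℝ × ℝ => fderiv ℝ g (p.1, γ p.2) :=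
    (hg.continuous_fderiv (by norm_num)).comp (cont_pair hg hγ)
  have cv : Continuous fun p : ℝ × ℝ => (((0:ℝ), deriv γ p.2) : ℝ × (Fin n → ℝ)) :=
    continuous_const.prodMk ((hγ.continuous_deriv le_rfl).comp continuous_snd)
  exact cA.clm_apply cv

lemma cont_BB (hg : ContDiff ℝ 2 g) (hγ : ContDiff ℝ 1 γ) :
    Continuous fun p : ℝ × ℝ => BB g γ p.1 p.2 := by
  have cB : Continuous fun p : ℝ × ℝ => fderiv ℝ (fderiv ℝ g) (p.1, γ p.2) :=
    ((hg.fderiv_right (m := 1) (by norm_num)).continuous_fderiv one_ne_zero).comp (cont_pair hg hγ)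
  have cv : Continuous fun p : ℝ × ℝ => (((0:ℝ), deriv γ p.2) : ℝ × (Fin n → ℝ)) :=
    continuous_const.prodMk ((hγ.continuous_deriv le_rfl).comp continuous_snd)
  exact (cB.clm_apply continuous_const).clm_apply cv

lemma cont_MAT (hu : ContDiff ℝ 1 u) (hg : ContDiff ℝ 2 g) (hγ : ContDiff ℝ 1 γ) :
    Continuous fun p : ℝ × ℝ => MAT u g γ p.1 p.2 := by
  have cdu : Continuous fun p : ℝ × ℝ =>
      fderiv ℝ u (p.1, g (p.1, γ p.2)) (1, u (p.1, g (p.1, γ p.2))) :=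
    (((hu.continuous_fderiv one_ne_zero).comp
      (continuous_fst.prodMk (hg.continuous.comp (cont_pair hg hγ)))).clm_apply
      (continuous_const.prodMk (cont_ucomp hu hg hγ)))
  exact continuous_finset_sum _ fun i _ =>
    ((continuous_apply i).comp cdu).mul ((continuous_apply i).comp (cont_DS hg hγ))

lemma cont_KK (hu : ContDiff ℝ 1 u) (hg : ContDiff ℝ 2 g) (hγ : ContDiff ℝ 1 γ) :
    Continuous fun p : ℝ × ℝ => KK u g γ p.1 p.2 :=
  continuous_finset_sum _ fun i _ =>
    ((continuous_apply i).comp (cont_ucomp hu hg hγ)).mul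
      ((continuous_apply i).comp (cont_BB hg hγ))

lemma cont_FC (hu : ContDiff ℝ 1 u) (hg : ContDiff ℝ 2 g) (hγ : ContDiff ℝ 1 γ) :
    Continuous fun p : ℝ × ℝ => FC u g γ p.1 p.2 :=
  continuous_finset_sum _ fun i _ =>
    ((continuous_apply i).comp (cont_ucomp hu hg hγ)).mul
      ((continuous_apply i).comp (cont_DS hg hγ))

/-- `KK t ·` is the derivative of `½|u|²` along the loop -/
lemma KK_is_deriv (hu : ContDiff ℝ 1 u) (hg : ContDiff ℝ 2 g) (hγ : ContDiff ℝ 1 γ)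
    (hflow : ∀ (t : ℝ) (x : Fin n → ℝ),
      HasDerivAt (fun s => g (s, x)) (u (t, g (t, x))) t)
    (t s : ℝ) :
    HasDerivAt (fun r => ∑ i, u (t, g (t, γ r)) i * u (t, g (t, γ r)) i / 2)
      (KK u g γ t s) s := by
  have hfg : ContDiff ℝ 1 (fderiv ℝ g) := hg.fderiv_right (by norm_num)
  have hA' : HasDerivAt (fun r => fderiv ℝ g (t, γ r))
      (fderiv ℝ (fderiv ℝ g) (t, γ s) (0, deriv γ s)) s :=
    ((hfg.differentiable one_ne_zero _).hasFDerivAt).comp_hasDerivAt s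
      ((hasDerivAt_const s t).prodMk ((hγ.differentiable one_ne_zero s).hasDerivAt))
  have h2 : HasDerivAt (fun r => fderiv ℝ g (t, γ r) (1, 0))
      (fderiv ℝ (fderiv ℝ g) (t, γ s) (0, deriv γ s) (1, 0)) s := by
    simpa using hA'.clm_apply
      (hasDerivAt_const s (((1:ℝ), (0 : Fin n → ℝ)) : ℝ × (Fin n → ℝ)))
  have h3 : HasDerivAt (fun r => u (t, g (t, γ r)))
      (fderiv ℝ (fderiv ℝ g) (t, γ s) (0, deriv γ s) (1, 0)) s := by
    have heq : (fun r => fderiv ℝ g (t, γ r) ((1:ℝ), (0 : Fin n → ℝ)))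
        = fun r => u (t, g (t, γ r)) :=
      funext fun r => fderiv_g_one hg hflow t (γ r)
    rwa [heq] at h2
  have hsym : fderiv ℝ (fderiv ℝ g) (t, γ s) (0, deriv γ s) (1, 0)
      = fderiv ℝ (fderiv ℝ g) (t, γ s) (1, 0) (0, deriv γ s) :=
    (hg.contDiffAt.isSymmSndFDerivAt (by simp)) _ _
  have h4 : HasDerivAt (fun r => u (t, g (t, γ r))) (BB g γ t s) s := by
    rw [BB, ← hsym]; exact h3
  have h5 : HasDerivAt (fun r => ∑ i, u (t, g (t, γ r)) i * u (t, g (t, γ r)) i / 2)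
      (∑ i, (BB g γ t s i * u (t, g (t, γ s)) i
        + u (t, g (t, γ s)) i * BB g γ t s i) / 2) s := by
    refine HasDerivAt.fun_sum fun i _ => ?_
    exact (((hasDerivAt_pi.1 h4) i).mul ((hasDerivAt_pi.1 h4) i)).div_const 2
  have hval : (∑ i, (BB g γ t s i * u (t, g (t, γ s)) i
      + u (t, g (t, γ s)) i * BB g γ t s i) / 2) = KK u g γ t s := by
    rw [KK]
    exact Finset.sum_congr rfl fun i _ => by ring
  rwa [hval] at h5

lemma integral_KK_eq_zero (hu : ContDiff ℝ 1 u) (hg : ContDiff ℝ 2 g) (hγ : ContDiff ℝ 1 γ)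
    (hflow : ∀ (t : ℝ) (x : Fin n → ℝ),
      HasDerivAt (fun s => g (s, x)) (u (t, g (t, x))) t)
    (hclosed : γ 0 = γ 1) (t : ℝ) :
    (∫ s in (0:ℝ)..1, KK u g γ t s) = 0 := by
  have hK : Continuous fun s => KK u g γ t s :=
    (cont_KK hu hg hγ).comp (continuous_const.prodMk continuous_id)
  have h := intervalIntegral.integral_eq_sub_of_hasDerivAt
    (f := fun r => ∑ i, u (t, g (t, γ r)) i * u (t, g (t, γ r)) i / 2)
    (fun s _ => KK_is_deriv hu hg hγ hflow t s) (hK.intervalIntegrable 0 1)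
  rw [h]; beta_reduce; rw [hclosed, sub_self]

end Kelvin

namespace Kelvin
variable {n : ℕ} {u g : ℝ × (Fin n → ℝ) → (Fin n → ℝ)} {γ : ℝ → (Fin n → ℝ)}


lemma clm_expand (L : (ℝ × (Fin n → ℝ)) →L[ℝ] ℝ) (v : Fin n → ℝ) :
    L (1, v) = L (1, 0) + ∑ j, v j * L (0, Pi.single j 1) := by
  have h2 : (∑ j, v j • (((0:ℝ), Pi.single j (1:ℝ)) : ℝ × (Fin n → ℝ))) = ((0:ℝ), v) := by
    ext k
    · simp [Prod.fst_sum]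
    · simp only [Prod.snd_sum, Prod.smul_mk, Finset.sum_apply, Pi.smul_apply,
        Pi.single_apply, smul_eq_mul, mul_ite, mul_one, mul_zero]
      simp [Finset.sum_ite_eq]
  have h1 : ((1:ℝ), v) = (((1:ℝ), (0 : Fin n → ℝ)) : ℝ × (Fin n → ℝ)) +
      ∑ j, v j • (((0:ℝ), Pi.single j (1:ℝ)) : ℝ × (Fin n → ℝ)) := by
    rw [h2]; ext <;> simp
  rw [h1, map_add, map_sum]
  congr 1
  refine Finset.sum_congr rfl fun j _ => ?_
  rw [map_smul, smul_eq_mul]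

lemma coord_fderiv (u : ℝ × (Fin n → ℝ) → (Fin n → ℝ)) (hu : Differentiable ℝ u)
    (p : ℝ × (Fin n → ℝ)) (v : ℝ × (Fin n → ℝ)) (i : Fin n) :
    fderiv ℝ (fun q => u q i) p v = fderiv ℝ u p v i := by
  have hdi : ∀ i : Fin n, DifferentiableAt ℝ (fun q => u q i) p := fun i =>
    ((ContinuousLinearMap.proj i : (Fin n → ℝ) →L[ℝ] ℝ).differentiable.comp hu) p
  have h := fderiv_pi (𝕜 := ℝ) (φ := fun i q => u q i) (x := p) hdi
  have : fderiv ℝ u p = ContinuousLinearMap.pi fun i => fderiv ℝ (fun q => u q i) p := h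
  rw [this, ContinuousLinearMap.pi_apply]

lemma MAT_eq (hu : ContDiff ℝ 1 u) (hg : ContDiff ℝ 2 g) (hγ : ContDiff ℝ 1 γ) (t s : ℝ) :
    (∑ i, (fderiv ℝ (fun q => u q i) (t, g (t, γ s)) (1, 0)
        + ∑ j, u (t, g (t, γ s)) j *
            fderiv ℝ (fun q => u q i) (t, g (t, γ s)) (0, Pi.single j 1))
      * deriv (fun r => g (t, γ r)) s i) = MAT u g γ t s := by
  rw [MAT]
  refine Finset.sum_congr rfl fun i _ => ?_
  rw [deriv_eq_DS hg hγ]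
  congr 1
  have hud := hu.differentiable one_ne_zero
  simp only [coord_fderiv u hud]
  have h := clm_expand
    ((ContinuousLinearMap.proj i).comp (fderiv ℝ u (t, g (t, γ s)))) (u (t, g (t, γ s)))
  simpa using h.symm

end Kelvin


/-- **Derivative of the circulation around an advected material loop.**
Let `u` be a `C¹` Eulerian velocity with `C²` flow map `g`
(`∂ₜg(t,x) = u(t, g(t,x))`) and let `γ` be a `C¹` closed curve.  Then the
circulation `C(t) = ∫₀¹ ⟨u(t, g(t,γ(s))), ∂ₛ[g(t,γ(s))]⟩ ds` is
differentiable and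
`C'(t) = ∫₀¹ ⟨(∂ₜu + (u·∇)u)(t, g(t,γ(s))), ∂ₛ[g(t,γ(s))]⟩ ds`:
the term `(∇u)ᵀ·u` contributes the exact differential of `|u|²/2` around
the closed loop and integrates to zero. -/
theorem circulation_derivative_is_material_derivative
    {n : ℕ} (hn : 1 ≤ n)
    (u : ℝ × (Fin n → ℝ) → (Fin n → ℝ))
    (g : ℝ × (Fin n → ℝ) → (Fin n → ℝ))
    (γ : ℝ → (Fin n → ℝ))
    (hu : ContDiff ℝ 1 u) (hg : ContDiff ℝ 2 g) (hγ : ContDiff ℝ 1 γ)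
    (hflow : ∀ (t : ℝ) (x : Fin n → ℝ),
      HasDerivAt (fun s => g (s, x)) (u (t, g (t, x))) t)
    (hclosed : γ 0 = γ 1) :
    ∀ t : ℝ,
      HasDerivAt
        (fun τ => ∫ s in (0:ℝ)..1,
          ∑ i, u (τ, g (τ, γ s)) i * deriv (fun r => g (τ, γ r)) s i)
        (∫ s in (0:ℝ)..1,
          ∑ i, (fderiv ℝ (fun q => u q i) (t, g (t, γ s)) (1, 0)
                + ∑ j, u (t, g (t, γ s)) j *
                    fderiv ℝ (fun q => u q i) (t, g (t, γ s)) (0, Pi.single j 1))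
              * deriv (fun r => g (t, γ r)) s i)
        t := by
  intro t
  have hfun : (fun τ => ∫ s in (0:ℝ)..1,
        ∑ i, u (τ, g (τ, γ s)) i * deriv (fun r => g (τ, γ r)) s i)
      = fun τ => ∫ s in (0:ℝ)..1, Kelvin.FC u g γ τ s := by
    funext τ
    refine intervalIntegral.integral_congr fun s _ => ?_
    simp [Kelvin.FC, Kelvin.deriv_eq_DS hg hγ]
  -- bound for the dominated convergence argument
  have cF' : Continuous fun p : ℝ × ℝ => Kelvin.MAT u g γ p.1 p.2 + Kelvin.KK u g γ p.1 p.2 :=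
    (Kelvin.cont_MAT hu hg hγ).add (Kelvin.cont_KK hu hg hγ)
  obtain ⟨M, hM⟩ :=
    ((isCompact_Icc (a := t - 1) (b := t + 1)).prod
      (isCompact_Icc (a := (0:ℝ)) (b := 1))).exists_bound_of_continuousOn cF'.continuousOn
  have main := intervalIntegral.hasDerivAt_integral_of_dominated_loc_of_deriv_le
    (F := fun τ s => Kelvin.FC u g γ τ s)
    (F' := fun τ s => Kelvin.MAT u g γ τ s + Kelvin.KK u g γ τ s)
    (bound := fun _ => M) (a := 0) (b := 1) (μ := MeasureTheory.volume) (x₀ := t)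
    (Metric.ball_mem_nhds t one_pos)
    (Filter.Eventually.of_forall fun τ =>
      (((Kelvin.cont_FC hu hg hγ).comp
        (continuous_const.prodMk continuous_id)).aestronglyMeasurable))
    (((Kelvin.cont_FC hu hg hγ).comp
        (continuous_const.prodMk continuous_id)).intervalIntegrable 0 1)
    ((cF'.comp (continuous_const.prodMk continuous_id)).aestronglyMeasurable)
    (Filter.Eventually.of_forall fun s hs τ hτ => by
      refine hM (τ, s) ⟨?_, ?_⟩
      · rw [Metric.mem_ball, Real.dist_eq] at hτ
        have := abs_lt.1 hτ
        exact Set.mem_Icc.2 ⟨by linarith [this.1], by linarith [this.2]⟩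
      · rw [Set.uIoc_of_le (by norm_num : (0:ℝ) ≤ 1)] at hs
        exact Set.mem_Icc.2 ⟨le_of_lt hs.1, hs.2⟩)
    (intervalIntegrable_const)
    (Filter.Eventually.of_forall fun s _ τ _ => Kelvin.hasDerivAt_FC hu hg hflow τ s)
  have hval : (∫ s in (0:ℝ)..1,
        ∑ i, (fderiv ℝ (fun q => u q i) (t, g (t, γ s)) (1, 0)
              + ∑ j, u (t, g (t, γ s)) j *
                  fderiv ℝ (fun q => u q i) (t, g (t, γ s)) (0, Pi.single j 1))
            * deriv (fun r => g (t, γ r)) s i)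
      = ∫ s in (0:ℝ)..1, (Kelvin.MAT u g γ t s + Kelvin.KK u g γ t s) := by
    have iMAT : IntervalIntegrable (fun s => Kelvin.MAT u g γ t s) MeasureTheory.volume 0 1 :=
      (((Kelvin.cont_MAT hu hg hγ).comp
        (continuous_const.prodMk continuous_id)).intervalIntegrable 0 1)
    have iKK : IntervalIntegrable (fun s => Kelvin.KK u g γ t s) MeasureTheory.volume 0 1 :=
      (((Kelvin.cont_KK hu hg hγ).comp
        (continuous_const.prodMk continuous_id)).intervalIntegrable 0 1)
    rw [intervalIntegral.integral_add iMAT iKK,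
      Kelvin.integral_KK_eq_zero hu hg hγ hflow hclosed t, add_zero]
    exact intervalIntegral.integral_congr fun s _ => Kelvin.MAT_eq hu hg hγ t s
  rw [hfun, hval]
  exact main.2
end

section
/- Let n ≥ 1, let u : ℝ × (Fin n → ℝ) → (Fin n → ℝ) be continuously differentiable and p : ℝ × (Fin n → ℝ) → ℝ be continuously differentiable, such that u solves the Euler momentum equation ∂ₜu_i + Σ_j u_j ∂_j u_i = −∂_i p at every (t,x). Let g : ℝ × (Fin n → ℝ) → (Fin n → ℝ) be twice continuously differentiable with ∂ₜg(t, x) = u(t, g(t, x)), and let γ : ℝ → (Fin n → ℝ) be a continuously differentiable closed curve with γ(0) = γ(1). Then the circulation C(t) := ∫₀¹ ⟨u(t, g(t, γ(s))), ∂ₛ[g(t, γ(s))]⟩ ds is constant in t (Kelvin's circulation theorem). -/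
open intervalIntegral

lemma kelvin_pair_sum {n : ℕ} (w : Fin n → ℝ) :
    ((0:ℝ), w) = ∑ i, w i • ((0:ℝ), (Pi.single i 1 : Fin n → ℝ)) := by
  apply Prod.ext
  · rw [Prod.fst_sum]; simp
  · rw [Prod.snd_sum]
    simp only [Prod.smul_snd]
    ext j
    simp [Pi.single_apply, Finset.sum_ite_eq]

lemma kelvin_clm_sum {n : ℕ} {E : Type*} [NormedAddCommGroup E] [NormedSpace ℝ E]
    (T : (ℝ × (Fin n → ℝ)) →L[ℝ] E) (w : Fin n → ℝ) :
    T (0, w) = ∑ i, w i • T (0, Pi.single i 1) := by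
  rw [kelvin_pair_sum w, map_sum]
  exact Finset.sum_congr rfl fun i _ => map_smul T _ _

/-- **Kelvin's circulation theorem.**
If `u` solves the Euler momentum equation `∂ₜuᵢ + Σⱼ uⱼ∂ⱼuᵢ = -∂ᵢp`, `g` is
a `C²` flow map of `u` (`∂ₜg(t,x) = u(t, g(t,x))`), and `γ` is a `C¹` closed
curve, then the circulation
`C(t) = ∫₀¹ ⟨u(t, g(t,γ(s))), ∂ₛ[g(t,γ(s))]⟩ ds` is constant in `t`. -/
theorem kelvin_circulation_theorem
    {n : ℕ} (hn : 1 ≤ n)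
    (u : ℝ × (Fin n → ℝ) → (Fin n → ℝ))
    (p : ℝ × (Fin n → ℝ) → ℝ)
    (g : ℝ × (Fin n → ℝ) → (Fin n → ℝ))
    (γ : ℝ → (Fin n → ℝ))
    (hu : ContDiff ℝ 1 u) (hp : ContDiff ℝ 1 p)
    (hg : ContDiff ℝ 2 g) (hγ : ContDiff ℝ 1 γ)
    (heuler : ∀ (q : ℝ × (Fin n → ℝ)) (i : Fin n),
      fderiv ℝ (fun r => u r i) q (1, 0)
        + ∑ j, u q j * fderiv ℝ (fun r => u r i) q (0, Pi.single j 1)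
      = - fderiv ℝ p q (0, Pi.single i 1))
    (hflow : ∀ (t : ℝ) (x : Fin n → ℝ),
      HasDerivAt (fun s => g (s, x)) (u (t, g (t, x))) t)
    (hclosed : γ 0 = γ 1) :
    ∀ t₁ t₂ : ℝ,
      (∫ s in (0:ℝ)..1,
        ∑ i, u (t₁, g (t₁, γ s)) i * deriv (fun r => g (t₁, γ r)) s i)
      = ∫ s in (0:ℝ)..1,
          ∑ i, u (t₂, g (t₂, γ s)) i * deriv (fun r => g (t₂, γ r)) s i := by
  intro t₁ t₂
  have hud : Differentiable ℝ u := hu.differentiable one_ne_zero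
  have hpd : Differentiable ℝ p := hp.differentiable one_ne_zero
  have hgd : Differentiable ℝ g := hg.differentiable two_ne_zero
  have hγd : Differentiable ℝ γ := hγ.differentiable one_ne_zero
  have hfg : ContDiff ℝ 1 (fderiv ℝ g) := hg.fderiv_right (by norm_num)
  have hfgd : Differentiable ℝ (fderiv ℝ g) := hfg.differentiable one_ne_zero
  set W : ℝ → ℝ → (Fin n → ℝ) :=
    fun t s => fderiv ℝ g (t, γ s) (0, deriv γ s) with hWdef
  set F : ℝ → ℝ → ℝ :=
    fun t s => ∑ i, u (t, g (t, γ s)) i * W t s i with hFdef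
  set Φ : ℝ → ℝ → ℝ :=
    fun t s => -p (t, g (t, γ s))
      + (1/2) * ∑ i, (u (t, g (t, γ s)) i) ^ 2 with hΦdef
  set F' : ℝ → ℝ → ℝ :=
    fun t s => -(fderiv ℝ p (t, g (t, γ s)) (0, W t s))
      + ∑ i, u (t, g (t, γ s)) i * fderiv ℝ u (t, g (t, γ s)) (0, W t s) i with hF'def
  have hWd : ∀ t s : ℝ, HasDerivAt (fun r => g (t, γ r)) (W t s) s := by
    intro t s
    have h1 : HasDerivAt (fun r : ℝ => ((t:ℝ), γ r)) ((0:ℝ), deriv γ s) s :=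
      (hasDerivAt_const s t).prodMk (hγd s).hasDerivAt
    exact (hgd (t, γ s)).hasFDerivAt.comp_hasDerivAt s h1
  have hQ : ∀ t s : ℝ,
      HasDerivAt (fun t' => (t', g (t', γ s))) ((1:ℝ), u (t, g (t, γ s))) t :=
    fun t s => (hasDerivAt_id t).prodMk (hflow t (γ s))
  have hgt : ∀ q : ℝ × (Fin n → ℝ),
      fderiv ℝ g q ((1:ℝ), (0:Fin n → ℝ)) = u (q.1, g q) := by
    intro q
    have h2 : HasDerivAt (fun t' : ℝ => (t', q.2)) ((1:ℝ), (0:Fin n → ℝ)) q.1 :=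
      (hasDerivAt_id q.1).prodMk (hasDerivAt_const _ _)
    have h1 : HasDerivAt (fun t' => g (t', q.2))
        (fderiv ℝ g q ((1:ℝ), (0:Fin n → ℝ))) q.1 := by
      have := (hgd (q.1, q.2)).hasFDerivAt.comp_hasDerivAt q.1 h2
      simpa [Function.comp_def] using this
    simpa using h1.unique (hflow q.1 q.2)
  have heuler' : ∀ (q : ℝ × (Fin n → ℝ)) (i : Fin n),
      fderiv ℝ (fun r => u r i) q (1, u q) = - fderiv ℝ p q (0, Pi.single i 1) := by
    intro q i
    have hsplit : ((1:ℝ), u q) = ((1:ℝ), (0:Fin n → ℝ)) + ((0:ℝ), u q) := by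
      ext <;> simp
    rw [hsplit, map_add, kelvin_clm_sum (fderiv ℝ (fun r => u r i) q) (u q)]
    simpa using heuler q i
  have hui : ∀ (t s : ℝ) (i : Fin n),
      HasDerivAt (fun t' => u (t', g (t', γ s)) i)
        (-(fderiv ℝ p (t, g (t, γ s)) (0, Pi.single i 1))) t := by
    intro t s i
    have huid : DifferentiableAt ℝ (fun r => u r i) (t, g (t, γ s)) :=
      (((ContinuousLinearMap.proj (R := ℝ) (φ := fun _ : Fin n => ℝ) i).hasFDerivAt
        (x := u (t, g (t, γ s)))).comp _ (hud _).hasFDerivAt).differentiableAt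
    have h1 : HasDerivAt (fun t' => u (t', g (t', γ s)) i)
        (fderiv ℝ (fun r => u r i) (t, g (t, γ s)) (1, u (t, g (t, γ s)))) t :=
      (huid.hasFDerivAt.comp_hasDerivAt t (hQ t s) :)
    rw [heuler' _ i] at h1
    exact h1
  have hmix : ∀ t s : ℝ,
      HasDerivAt (fun t' => W t' s)
        (fderiv ℝ u (t, g (t, γ s)) (0, W t s)) t := by
    intro t s
    rw [hWdef]
    set q : ℝ × (Fin n → ℝ) := (t, γ s) with hq
    set v : Fin n → ℝ := deriv γ s with hv
    set D2 := fderiv ℝ (fderiv ℝ g) q with hD2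
    have ha : HasDerivAt (fun t' : ℝ => (t', γ s)) ((1:ℝ), (0:Fin n → ℝ)) t :=
      (hasDerivAt_id t).prodMk (hasDerivAt_const _ _)
    have hb : HasDerivAt (fun t' => fderiv ℝ g (t', γ s))
        (D2 ((1:ℝ), (0:Fin n → ℝ))) t :=
      (hfgd q).hasFDerivAt.comp_hasDerivAt t ha
    have hc : HasDerivAt (fun t' => fderiv ℝ g (t', γ s) ((0:ℝ), v))
        (D2 ((1:ℝ), (0:Fin n → ℝ)) ((0:ℝ), v)) t := by
      have := hb.clm_apply (hasDerivAt_const t (((0:ℝ), v) : ℝ × (Fin n → ℝ)))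
      simpa using this
    have hsymm : D2 ((1:ℝ), (0:Fin n → ℝ)) ((0:ℝ), v)
        = D2 ((0:ℝ), v) ((1:ℝ), (0:Fin n → ℝ)) :=
      (hg.contDiffAt.isSymmSndFDerivAt (by simp)) _ _
    have hφ : HasFDerivAt (fun q' => fderiv ℝ g q' ((1:ℝ), (0:Fin n → ℝ)))
        ((fderiv ℝ g q).comp (0 : (ℝ × (Fin n → ℝ)) →L[ℝ] (ℝ × (Fin n → ℝ)))
          + D2.flip ((1:ℝ), (0:Fin n → ℝ))) q :=
      (hfgd q).hasFDerivAt.clm_apply (hasFDerivAt_const _ _)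
    have hψ : HasFDerivAt (fun q' : ℝ × (Fin n → ℝ) => u (q'.1, g q'))
        ((fderiv ℝ u (q.1, g q)).comp
          ((ContinuousLinearMap.fst ℝ ℝ (Fin n → ℝ)).prod (fderiv ℝ g q))) q :=
      (hud (q.1, g q)).hasFDerivAt.comp q (hasFDerivAt_fst.prodMk (hgd q).hasFDerivAt)
    have hfun : (fun q' : ℝ × (Fin n → ℝ) => fderiv ℝ g q' ((1:ℝ), (0:Fin n → ℝ)))
        = fun q' : ℝ × (Fin n → ℝ) => u (q'.1, g q') := funext hgt
    rw [hfun] at hφ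
    have heval := ContinuousLinearMap.ext_iff.1 (hφ.unique hψ) (((0:ℝ), v) : ℝ × (Fin n → ℝ))
    simp only [ContinuousLinearMap.add_apply, ContinuousLinearMap.comp_apply,
      ContinuousLinearMap.zero_apply, map_zero, zero_add,
      ContinuousLinearMap.flip_apply, ContinuousLinearMap.prod_apply,
      ContinuousLinearMap.coe_fst'] at heval
    rw [hsymm, heval] at hc
    simpa using hc
  have hWi : ∀ (t s : ℝ) (i : Fin n),
      HasDerivAt (fun t' => W t' s i)
        (fderiv ℝ u (t, g (t, γ s)) (0, W t s) i) t := by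
    intro t s i
    exact (((ContinuousLinearMap.proj (R := ℝ) (φ := fun _ : Fin n => ℝ) i).hasFDerivAt
      (x := W t s)).comp_hasDerivAt t (hmix t s) :)
  have hFt : ∀ t s : ℝ, HasDerivAt (fun t' => F t' s) (F' t s) t := by
    intro t s
    have hsum : HasDerivAt (fun t' => ∑ i, u (t', g (t', γ s)) i * W t' s i)
        (∑ i, ((-(fderiv ℝ p (t, g (t, γ s)) (0, Pi.single i 1))) * W t s i
          + u (t, g (t, γ s)) i * fderiv ℝ u (t, g (t, γ s)) (0, W t s) i)) t :=
      HasDerivAt.fun_sum fun i _ => (hui t s i).mul (hWi t s i)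
    have hps : fderiv ℝ p (t, g (t, γ s)) ((0:ℝ), W t s)
        = ∑ i, W t s i * fderiv ℝ p (t, g (t, γ s)) (0, Pi.single i 1) := by
      simpa [smul_eq_mul] using kelvin_clm_sum (fderiv ℝ p (t, g (t, γ s))) (W t s)
    have hkey : F' t s = ∑ i, ((-(fderiv ℝ p (t, g (t, γ s)) (0, Pi.single i 1))) * W t s i
          + u (t, g (t, γ s)) i * fderiv ℝ u (t, g (t, γ s)) (0, W t s) i) := by
      rw [hF'def]
      simp only
      rw [hps, Finset.sum_add_distrib, ← Finset.sum_neg_distrib]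
      congr 1
      exact Finset.sum_congr rfl fun i _ => by ring
    rw [hkey]
    exact hsum
  have hΦs : ∀ t s : ℝ, HasDerivAt (fun r => Φ t r) (F' t s) s := by
    intro t s
    have hQs : HasDerivAt (fun r => ((t:ℝ), g (t, γ r))) ((0:ℝ), W t s) s :=
      (hasDerivAt_const s t).prodMk (hWd t s)
    have hpc : HasDerivAt (fun r => p (t, g (t, γ r)))
        (fderiv ℝ p (t, g (t, γ s)) ((0:ℝ), W t s)) s :=
      (hpd _).hasFDerivAt.comp_hasDerivAt s hQs
    have huv : HasDerivAt (fun r => u (t, g (t, γ r)))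
        (fderiv ℝ u (t, g (t, γ s)) ((0:ℝ), W t s)) s :=
      (hud _).hasFDerivAt.comp_hasDerivAt s hQs
    have huc : ∀ i, HasDerivAt (fun r => u (t, g (t, γ r)) i)
        (fderiv ℝ u (t, g (t, γ s)) ((0:ℝ), W t s) i) s := fun i =>
      (((ContinuousLinearMap.proj (R := ℝ) (φ := fun _ : Fin n => ℝ) i).hasFDerivAt
        (x := u (t, g (t, γ s)))).comp_hasDerivAt s huv :)
    have h2 : HasDerivAt (fun r => Φ t r)
        (-(fderiv ℝ p (t, g (t, γ s)) ((0:ℝ), W t s))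
          + (1/2) * ∑ i, ((2:ℕ) * u (t, g (t, γ s)) i ^ 1
              * fderiv ℝ u (t, g (t, γ s)) ((0:ℝ), W t s) i)) s := by
      rw [hΦdef]
      exact (hpc.neg).add ((HasDerivAt.fun_sum (fun i _ => (huc i).pow 2)).const_mul (1/2))
    have hkey : F' t s = -(fderiv ℝ p (t, g (t, γ s)) ((0:ℝ), W t s))
          + (1/2) * ∑ i, ((2:ℕ) * u (t, g (t, γ s)) i ^ 1
              * fderiv ℝ u (t, g (t, γ s)) ((0:ℝ), W t s) i) := by
      rw [hF'def]
      simp only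
      congr 1
      rw [Finset.mul_sum]
      exact Finset.sum_congr rfl fun i _ => by push_cast; ring
    rw [hkey]
    exact h2
  -- continuity
  have hγc : Continuous γ := hγ.continuous
  have hγ' : Continuous (deriv γ) := hγ.continuous_deriv le_rfl
  have hgc : Continuous (fderiv ℝ g) := hfg.continuous
  have hqc : Continuous fun z : ℝ × ℝ => ((z.1 : ℝ), γ z.2) :=
    continuous_fst.prodMk (hγc.comp continuous_snd)
  have hQc : Continuous fun z : ℝ × ℝ => ((z.1 : ℝ), g (z.1, γ z.2)) :=
    continuous_fst.prodMk (hg.continuous.comp hqc)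
  have hWc : Continuous fun z : ℝ × ℝ => W z.1 z.2 := by
    rw [hWdef]
    exact (hgc.comp hqc).clm_apply
      (continuous_const.prodMk (hγ'.comp continuous_snd))
  have huQc : Continuous fun z : ℝ × ℝ => u (z.1, g (z.1, γ z.2)) :=
    hu.continuous.comp hQc
  have hFc : Continuous fun z : ℝ × ℝ => F z.1 z.2 := by
    rw [hFdef]
    exact continuous_finset_sum _ fun i _ =>
      ((continuous_apply i).comp huQc).mul ((continuous_apply i).comp hWc)
  have hF'c : Continuous fun z : ℝ × ℝ => F' z.1 z.2 := by
    rw [hF'def]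
    have hpf : Continuous (fderiv ℝ p) := hp.continuous_fderiv one_ne_zero
    have huf : Continuous (fderiv ℝ u) := hu.continuous_fderiv one_ne_zero
    have hzW : Continuous fun z : ℝ × ℝ => (((0:ℝ), W z.1 z.2) : ℝ × (Fin n → ℝ)) :=
      continuous_const.prodMk hWc
    exact (((hpf.comp hQc).clm_apply hzW).neg).add (continuous_finset_sum _ fun i _ =>
      ((continuous_apply i).comp huQc).mul
        ((continuous_apply i).comp ((huf.comp hQc).clm_apply hzW)))
  -- derivative of the circulation vanishes
  have hC : ∀ t : ℝ, HasDerivAt (fun t' => ∫ s in (0:ℝ)..1, F t' s) 0 t := by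
    intro t₀
    have hK : IsCompact ((Set.Icc (t₀-1) (t₀+1)) ×ˢ (Set.Icc (0:ℝ) 1)) :=
      isCompact_Icc.prod isCompact_Icc
    obtain ⟨M, hM⟩ := hK.exists_bound_of_continuousOn hF'c.continuousOn
    have hIoc : ∀ s : ℝ, s ∈ Set.uIoc (0:ℝ) 1 → s ∈ Set.Icc (0:ℝ) 1 := by
      intro s hs
      rw [Set.uIoc_of_le zero_le_one] at hs
      exact ⟨hs.1.le, hs.2⟩
    have main := intervalIntegral.hasDerivAt_integral_of_dominated_loc_of_deriv_le
      (F := fun t s => F t s) (F' := fun t s => F' t s) (x₀ := t₀) (a := (0:ℝ)) (b := 1)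
      (bound := fun _ => M) (μ := MeasureTheory.volume) (Metric.ball_mem_nhds t₀ zero_lt_one)
      (Filter.Eventually.of_forall fun x =>
        (hFc.comp (Continuous.prodMk_right x)).aestronglyMeasurable)
      ((hFc.comp (Continuous.prodMk_right t₀)).intervalIntegrable 0 1)
      (hF'c.comp (Continuous.prodMk_right t₀)).aestronglyMeasurable
      (Filter.Eventually.of_forall fun s hs x hx => by
        have hx' : x ∈ Set.Icc (t₀-1) (t₀+1) := by
          rw [Metric.mem_ball, Real.dist_eq, abs_lt] at hx
          constructor <;> linarith
        exact hM (x, s) ⟨hx', hIoc s hs⟩)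
      (intervalIntegrable_const)
      (Filter.Eventually.of_forall fun s _ x _ => hFt x s)
    have hFTC : (∫ s in (0:ℝ)..1, F' t₀ s) = Φ t₀ 1 - Φ t₀ 0 :=
      integral_eq_sub_of_hasDerivAt (fun s _ => hΦs t₀ s)
        ((hF'c.comp (Continuous.prodMk_right t₀)).intervalIntegrable 0 1)
    have hzero : (∫ s in (0:ℝ)..1, F' t₀ s) = 0 := by
      rw [hFTC, hΦdef]
      simp only
      rw [hclosed]
      ring
    have h2 := main.2
    try simp only at h2
    rw [hzero] at h2
    exact h2
  have hconst : (∫ s in (0:ℝ)..1, F t₁ s) = ∫ s in (0:ℝ)..1, F t₂ s :=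
    is_const_of_deriv_eq_zero (fun t => (hC t).differentiableAt)
      (fun t => (hC t).deriv) t₁ t₂
  have hrw : ∀ t : ℝ,
      (∫ s in (0:ℝ)..1, ∑ i, u (t, g (t, γ s)) i * deriv (fun r => g (t, γ r)) s i)
        = ∫ s in (0:ℝ)..1, F t s := by
    intro t
    refine intervalIntegral.integral_congr fun s _ => ?_
    rw [(hWd t s).deriv]
  rw [hrw t₁, hrw t₂]
  exact hconst
end

section
/- Let n ≥ 1 and suppose u : ℝ × (Fin n → ℝ) → (Fin n → ℝ), π, l : ℝ × (Fin n → ℝ) → (Fin n → ℝ), k : ℝ × (Fin n → ℝ) → ℝ are continuously differentiable and satisfy at every (t,x): u_i = −Σ_a π_a ∂_i l_a − ∂_i k, ∂ₜπ_a + Σ_j u_j ∂_j π_a = 0, and ∂ₜl_a + Σ_j u_j ∂_j l_a = 0. Define π' := −l, l' := π, and k' := k + Σ_a π_a l_a. Then (π', l', k') is again a Clebsch representation of the same velocity field: u_i = −Σ_a π'_a ∂_i l'_a − ∂_i k', with ∂ₜπ'_a + Σ_j u_j ∂_j π'_a = 0 and ∂ₜl'_a + Σ_j u_j ∂_j l'_a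 = 0 at every (t,x). Hence the Clebsch extremal system is symmetric under exchanging the roles of π and l up to a gauge transformation of k. -/
/-- **Exchange symmetry `π ↔ l` of the Clebsch representation up to a gauge
transformation of `k`.**  If `u = -π_a ∇l_a - ∇k` with both Clebsch
variables advected by the flow, then `π' := -l`, `l' := π`,
`k' := k + Σ_a π_a l_a` is again a Clebsch representation of the same
velocity field, with `π'` and `l'` advected by the flow. -/
theorem clebsch_exchange_symmetry
    {n : ℕ} (hn : 1 ≤ n)
    (u π l : ℝ × (Fin n → ℝ) → (Fin n → ℝ))
    (k : ℝ × (Fin n → ℝ) → ℝ)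
    (hu : ContDiff ℝ 1 u) (hπ : ContDiff ℝ 1 π)
    (hl : ContDiff ℝ 1 l) (hk : ContDiff ℝ 1 k)
    (hclebsch : ∀ (p : ℝ × (Fin n → ℝ)) (i : Fin n),
      u p i = -(∑ a, π p a * fderiv ℝ (fun q => l q a) p (0, Pi.single i 1))
              - fderiv ℝ k p (0, Pi.single i 1))
    (hadvπ : ∀ (p : ℝ × (Fin n → ℝ)) (a : Fin n),
      fderiv ℝ (fun q => π q a) p (1, 0)
        + ∑ j, u p j * fderiv ℝ (fun q => π q a) p (0, Pi.single j 1) = 0)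
    (hadvl : ∀ (p : ℝ × (Fin n → ℝ)) (a : Fin n),
      fderiv ℝ (fun q => l q a) p (1, 0)
        + ∑ j, u p j * fderiv ℝ (fun q => l q a) p (0, Pi.single j 1) = 0) :
    (∀ (p : ℝ × (Fin n → ℝ)) (i : Fin n),
      u p i = -(∑ a, (-(l p a)) * fderiv ℝ (fun q => π q a) p (0, Pi.single i 1))
              - fderiv ℝ (fun q => k q + ∑ a, π q a * l q a) p (0, Pi.single i 1)) ∧
    (∀ (p : ℝ × (Fin n → ℝ)) (a : Fin n),
      fderiv ℝ (fun q => -(l q a)) p (1, 0)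
        + ∑ j, u p j * fderiv ℝ (fun q => -(l q a)) p (0, Pi.single j 1) = 0) ∧
    (∀ (p : ℝ × (Fin n → ℝ)) (a : Fin n),
      fderiv ℝ (fun q => π q a) p (1, 0)
        + ∑ j, u p j * fderiv ℝ (fun q => π q a) p (0, Pi.single j 1) = 0) := by
  have hπa : ∀ a : Fin n, Differentiable ℝ (fun q => π q a) :=
    differentiable_pi.mp (hπ.differentiable one_ne_zero)
  have hla : ∀ a : Fin n, Differentiable ℝ (fun q => l q a) :=
    differentiable_pi.mp (hl.differentiable one_ne_zero)
  have hkd : Differentiable ℝ k := hk.differentiable one_ne_zero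
  have key : ∀ (p : ℝ × (Fin n → ℝ)) (v : ℝ × (Fin n → ℝ)),
      fderiv ℝ (fun q => k q + ∑ a, π q a * l q a) p v
        = fderiv ℝ k p v + ∑ a, (π p a * fderiv ℝ (fun q => l q a) p v
            + l p a * fderiv ℝ (fun q => π q a) p v) := by
    intro p v
    have hsum : DifferentiableAt ℝ (fun q => ∑ a, π q a * l q a) p :=
      DifferentiableAt.fun_sum fun a _ => ((hπa a) p).fun_mul ((hla a) p)
    rw [fderiv_fun_add (hkd p) hsum]
    simp only [ContinuousLinearMap.add_apply]
    congr 1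
    rw [fderiv_fun_sum (fun a _ => ((hπa a) p).fun_mul ((hla a) p))]
    simp only [ContinuousLinearMap.sum_apply]
    refine Finset.sum_congr rfl fun a _ => ?_
    rw [fderiv_fun_mul ((hπa a) p) ((hla a) p)]
    simp [mul_comm]
  refine ⟨?_, ?_, hadvπ⟩
  · intro p i
    rw [key p (0, Pi.single i 1), hclebsch p i]
    simp only [neg_mul]
    rw [Finset.sum_neg_distrib, Finset.sum_add_distrib]
    ring
  · intro p a
    have h1 : ∀ q : ℝ × (Fin n → ℝ), (fun q => -(l q a)) q = -(fun q => l q a) q :=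
      fun _ => rfl
    have hneg : ∀ v, fderiv ℝ (fun q => -(l q a)) p v = -(fderiv ℝ (fun q => l q a) p v) := by
      intro v
      rw [show (fun q => -(l q a)) = (fun q => -((fun q' => l q' a) q)) from rfl,
        fderiv_fun_neg]
      simp
    simp only [hneg, mul_neg]
    have := hadvl p a
    rw [Finset.sum_neg_distrib]
    linarith [hadvl p a]
end
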